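/- arXiv:1303.6232 — 5 statements merged into one kernel-verified Lean document; each statement's English description precedes it below -/
import Mathlib

section
/- Let N ≥ 1 and let μ and ν be finite Borel measures on the unit sphere S^{N-1} of Euclidean space ℝ^N such that μ linearly majorizes ν. Then for every sublinear functional p : ℝ^N → ℝ (i.e., p is positively homogeneous and subadditive) one has ∫_{S^{N-1}} p dμ ≥ ∫_{S^{N-1}} p dν. (Reshetnyak's theorem.) -/
open MeasureTheory

/-- The unit sphere `S^{N-1}` of Euclidean space `ℝ^N`. -/
abbrev UnitSphere (N : ℕ) : Set (EuclideanSpace ℝ (Fin N)) :=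
  Metric.sphere (0 : EuclideanSpace ℝ (Fin N)) 1

/-- `LinMaj N μ ν` : the measure `μ` linearly majorizes the measure `ν` on the unit
sphere `S^{N-1}`, i.e. for every decomposition of the sphere into finitely many pairwise
disjoint Borel sets `U 1, …, U m` there are finite Borel measures `μ 1, …, μ m` summing
to `μ` such that for every `k` and every continuous linear functional `ℓ` on `ℝ^N`,
`∫ ℓ dμ_k = ∫_{U k} ℓ dν`. -/
def LinMaj (N : ℕ) (μ ν : Measure (UnitSphere N)) : Prop :=
  ∀ (m : ℕ) (U : Fin m → Set (UnitSphere N)),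
    (∀ k, MeasurableSet (U k)) →
    (Pairwise fun i j => Disjoint (U i) (U j)) →
    (⋃ k, U k) = Set.univ →
    ∃ μk : Fin m → Measure (UnitSphere N),
      (∀ k, IsFiniteMeasure (μk k)) ∧
      μ = ∑ k, μk k ∧
      ∀ (k : Fin m) (ℓ : EuclideanSpace ℝ (Fin N) →L[ℝ] ℝ),
        ∫ z, ℓ (z : EuclideanSpace ℝ (Fin N)) ∂(μk k)
          = ∫ z in U k, ℓ (z : EuclideanSpace ℝ (Fin N)) ∂ν

/-- **Reshetnyak's theorem.** If `μ` linearly majorizes `ν` on the unit sphere, then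
`∫ p dμ ≥ ∫ p dν` for every sublinear functional `p : ℝ^N → ℝ`. -/
theorem reshetnyak_of_linMaj {N : ℕ} (hN : 1 ≤ N)
    (μ ν : Measure (UnitSphere N)) [IsFiniteMeasure μ] [IsFiniteMeasure ν]
    (hmaj : LinMaj N μ ν)
    (p : EuclideanSpace ℝ (Fin N) → ℝ)
    (hp_homog : ∀ t : ℝ, 0 ≤ t → ∀ x, p (t • x) = t * p x)
    (hp_subadd : ∀ x y, p (x + y) ≤ p x + p y) :
    ∫ z, p (z : EuclideanSpace ℝ (Fin N)) ∂ν
      ≤ ∫ z, p (z : EuclideanSpace ℝ (Fin N)) ∂μ := by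
  have p0 : p 0 = 0 := by
    have := hp_homog 0 le_rfl 0
    simpa using this
  have hconv : ConvexOn ℝ Set.univ p := by
    refine ⟨convex_univ, fun x _ y _ a b ha hb hab => ?_⟩
    calc p (a • x + b • y) ≤ p (a • x) + p (b • y) := hp_subadd _ _
      _ = a * p x + b * p y := by rw [hp_homog a ha, hp_homog b hb]
  have hp_cont : Continuous p := continuousOn_univ.mp (hconv.continuousOn isOpen_univ)
  have hsph : (Metric.sphere (0 : EuclideanSpace ℝ (Fin N)) 1).Nonempty := by
    refine ⟨EuclideanSpace.single ⟨0, hN⟩ 1, ?_⟩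
    simp [EuclideanSpace.norm_single]
  obtain ⟨C, hC0, hCle⟩ : ∃ C : ℝ, 0 ≤ C ∧ ∀ u, p u ≤ C * ‖u‖ := by
    obtain ⟨x₀, _, hx₀⟩ := (isCompact_sphere (0 : EuclideanSpace ℝ (Fin N)) 1).exists_isMaxOn
      hsph hp_cont.continuousOn
    refine ⟨max (p x₀) 0, le_max_right _ _, fun u => ?_⟩
    rcases eq_or_ne u 0 with rfl | hu
    · simp [p0]
    · have hnu : ‖u‖ ≠ 0 := norm_ne_zero_iff.mpr hu
      have h1 : p u = ‖u‖ * p (‖u‖⁻¹ • u) := by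
        rw [← hp_homog ‖u‖ (norm_nonneg u) (‖u‖⁻¹ • u), smul_smul,
          mul_inv_cancel₀ hnu, one_smul]
      have hm : ‖u‖⁻¹ • u ∈ Metric.sphere (0 : EuclideanSpace ℝ (Fin N)) 1 := by
        simp [norm_smul, inv_mul_cancel₀ hnu]
      have h2 := hx₀ hm
      rw [h1, mul_comm]
      exact mul_le_mul_of_nonneg_right (h2.trans (le_max_left _ _)) (norm_nonneg u)
  have hsupp : ∀ z : EuclideanSpace ℝ (Fin N), z ≠ 0 →
      ∃ ℓ : EuclideanSpace ℝ (Fin N) →L[ℝ] ℝ, (∀ x, ℓ x ≤ p x) ∧ ℓ z = p z := by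
    intro z hz
    set f := LinearPMap.mkSpanSingleton (K := ℝ) (L := ℝ) (σ := RingHom.id ℝ) z (p z) hz with hf
    have hfle : ∀ x : f.domain, f x ≤ p x := by
      rintro ⟨x, hx⟩
      obtain ⟨c, rfl⟩ := Submodule.mem_span_singleton.mp hx
      have happ : f ⟨c • z, hx⟩ = c • p z := LinearPMap.mkSpanSingleton'_apply _ _ _ c hx
      rw [happ]
      rcases le_or_gt 0 c with hc | hc
      · rw [hp_homog c hc, smul_eq_mul]
      · have hpz : 0 ≤ p z + p (-z) := by
          have := hp_subadd z (-z); simpa [p0] using this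
        have : p (c • z) = (-c) * p (-z) := by
          rw [show c • z = (-c) • (-z) by module, hp_homog (-c) (by linarith)]
        rw [this, smul_eq_mul]
        nlinarith
    obtain ⟨g, hg_eq, hg_le⟩ := exists_extension_of_le_sublinear f p
      (fun c hc x => hp_homog c hc.le x) hp_subadd hfle
    refine ⟨LinearMap.toContinuousLinearMap g, fun x => by simpa using hg_le x, ?_⟩
    have h1 := hg_eq ⟨z, Submodule.mem_span_singleton_self z⟩
    have h2 : f ⟨z, Submodule.mem_span_singleton_self z⟩ = p z :=
      LinearPMap.mkSpanSingleton_apply ℝ ℝ hz (p z)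
    simpa [h2] using h1
  -- integrability helper
  have hint : ∀ (f : UnitSphere N → ℝ), Continuous f → ∀ (ρ : Measure (UnitSphere N)),
      IsFiniteMeasure ρ → Integrable f ρ := by
    intro f hf ρ hρ
    exact hf.integrable_of_hasCompactSupport (IsClosed.isCompact (isClosed_tsupport f))
  have hpcont : Continuous fun z : UnitSphere N => p (z : EuclideanSpace ℝ (Fin N)) :=
    hp_cont.comp continuous_subtype_val
  -- main argument
  refine le_of_forall_pos_le_add fun ε hε => ?_
  set B := (ν Set.univ).toReal with hB
  have hB0 : 0 ≤ B := ENNReal.toReal_nonneg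
  have hpos : (0:ℝ) < 2 * C * B + 1 := by positivity
  obtain ⟨δ, hδpos, hδbound⟩ : ∃ δ : ℝ, 0 < δ ∧ 2 * C * δ * B ≤ ε := by
    refine ⟨ε / (2 * C * B + 1), div_pos hε hpos, ?_⟩
    have h1 : 2 * C * (ε / (2 * C * B + 1)) * B = 2 * C * B * ε / (2 * C * B + 1) := by ring
    rw [h1, div_le_iff₀ hpos]
    nlinarith
  obtain ⟨t, ht⟩ := isCompact_univ.elim_finite_subcover
    (fun c : UnitSphere N => Metric.ball c δ) (fun c => Metric.isOpen_ball)
    (fun x _ => Set.mem_iUnion.mpr ⟨x, Metric.mem_ball_self hδpos⟩)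
  set m := t.card with hm
  set c : Fin m → UnitSphere N := fun k => (t.equivFin.symm k : UnitSphere N) with hc
  set V' : ℕ → Set (UnitSphere N) := fun n =>
    if h : n < m then Metric.ball (c ⟨n, h⟩) δ else ∅ with hV'
  have hV'meas : ∀ n, MeasurableSet (V' n) := by
    intro n
    by_cases h : n < m <;> simp [hV', h, measurableSet_ball]
  set U : Fin m → Set (UnitSphere N) := fun k => disjointed V' k with hU
  have hUmeas : ∀ k, MeasurableSet (U k) := fun k => MeasurableSet.disjointed hV'meas _
  have hUdisj : Pairwise fun i j => Disjoint (U i) (U j) := fun i j hij =>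
    disjoint_disjointed V' (fun h => hij (Fin.val_injective h))
  have hUsub : ∀ k : Fin m, U k ⊆ Metric.ball (c k) δ := by
    intro k
    refine (disjointed_subset V' k).trans ?_
    simp [hV', k.isLt]
  have hUcover : (⋃ k, U k) = Set.univ := by
    apply Set.eq_univ_of_univ_subset
    intro x _
    have hx : x ∈ ⋃ n, disjointed V' n := by
      rw [iUnion_disjointed]
      have hx2 : x ∈ ⋃ i ∈ t, Metric.ball (i : UnitSphere N) δ := ht (Set.mem_univ x)
      obtain ⟨i, hit, hxi⟩ := Set.mem_iUnion₂.mp hx2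
      refine Set.mem_iUnion.mpr ⟨(t.equivFin ⟨i, hit⟩ : ℕ), ?_⟩
      have hlt : ((t.equivFin ⟨i, hit⟩ : Fin m) : ℕ) < m := (t.equivFin ⟨i, hit⟩).isLt
      have hceq : c ⟨(t.equivFin ⟨i, hit⟩ : ℕ), hlt⟩ = i := by
        simp [hc, Fin.eta]
      simp only [hV', dif_pos hlt]
      rw [hceq]
      exact hxi
    obtain ⟨n, hn⟩ := Set.mem_iUnion.mp hx
    have hnm : n < m := by
      by_contra h
      have h1 : disjointed V' n ⊆ V' n := disjointed_subset V' n
      have h2 : V' n = ∅ := by simp [hV', h]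
      rw [h2] at h1
      exact h1 hn
    exact Set.mem_iUnion.mpr ⟨⟨n, hnm⟩, hn⟩
  obtain ⟨μk, hμkfin, hμsum, hmom⟩ := hmaj m U hUmeas hUdisj hUcover
  have hcne : ∀ k : Fin m, ((c k : EuclideanSpace ℝ (Fin N))) ≠ 0 := by
    intro k
    have h1 : ‖(c k : EuclideanSpace ℝ (Fin N))‖ = 1 := by
      have h := (c k).2
      rw [mem_sphere_zero_iff_norm] at h
      exact h
    intro h
    rw [h] at h1
    simp at h1
  choose ℓ hℓle hℓeq using fun k : Fin m => hsupp (c k) (hcne k)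
  have hℓcont : ∀ k, Continuous fun z : UnitSphere N => ℓ k (z : EuclideanSpace ℝ (Fin N)) :=
    fun k => (ℓ k).continuous.comp continuous_subtype_val
  have hptwise : ∀ k : Fin m, ∀ z ∈ U k,
      p (z : EuclideanSpace ℝ (Fin N)) ≤ ℓ k (z : EuclideanSpace ℝ (Fin N)) + 2 * C * δ := by
    intro k z hz
    have hd : dist z (c k) < δ := hUsub k hz
    obtain ⟨zz, hzz⟩ : ∃ zz, (z : EuclideanSpace ℝ (Fin N)) = zz := ⟨_, rfl⟩
    obtain ⟨cc, hcc⟩ : ∃ cc, ((c k) : EuclideanSpace ℝ (Fin N)) = cc := ⟨_, rfl⟩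
    rw [hzz]
    have hnorm : ‖zz - cc‖ < δ := by
      rw [← hzz, ← hcc]
      rwa [Subtype.dist_eq, dist_eq_norm] at hd
    have h1 : p zz ≤ p cc + p (zz - cc) := by
      have := hp_subadd cc (zz - cc)
      simpa using this
    have h2 : p cc = ℓ k cc := by rw [← hcc]; exact (hℓeq k).symm
    have h3 : ℓ k cc = ℓ k zz + ℓ k (cc - zz) := by
      rw [← map_add, add_sub_cancel]
    have h4 : ℓ k (cc - zz) ≤ p (cc - zz) := hℓle k _
    have h5 : p (zz - cc) ≤ C * ‖zz - cc‖ := hCle _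
    have h6 : p (cc - zz) ≤ C * ‖cc - zz‖ := hCle _
    have h7 : ‖cc - zz‖ = ‖zz - cc‖ := norm_sub_rev _ _
    rw [h7] at h6
    have h8 : C * ‖zz - cc‖ ≤ C * δ := mul_le_mul_of_nonneg_left hnorm.le hC0
    have h9 : C * δ + C * δ = 2 * C * δ := by ring
    linarith
  have key : ∀ k : Fin m, ∫ z in U k, p (z : EuclideanSpace ℝ (Fin N)) ∂ν
      ≤ ∫ z, p (z : EuclideanSpace ℝ (Fin N)) ∂(μk k) + 2 * C * δ * (ν (U k)).toReal := by
    intro k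
    haveI := hμkfin k
    have hpint : IntegrableOn (fun z : UnitSphere N => p (z : EuclideanSpace ℝ (Fin N))) (U k) ν :=
      (hint _ hpcont ν inferInstance).integrableOn
    have hℓint : IntegrableOn (fun z : UnitSphere N => ℓ k (z : EuclideanSpace ℝ (Fin N))) (U k) ν :=
      (hint _ (hℓcont k) ν inferInstance).integrableOn
    calc ∫ z in U k, p (z : EuclideanSpace ℝ (Fin N)) ∂ν
        ≤ ∫ z in U k, (ℓ k (z : EuclideanSpace ℝ (Fin N)) + 2 * C * δ) ∂ν := by
          refine setIntegral_mono_on hpint (hℓint.add (integrableOn_const ?_))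
            (hUmeas k) (hptwise k)
          exact measure_ne_top _ _
      _ = ∫ z in U k, ℓ k (z : EuclideanSpace ℝ (Fin N)) ∂ν + 2 * C * δ * (ν (U k)).toReal := by
          rw [integral_add hℓint (integrable_const _), setIntegral_const, smul_eq_mul, mul_comm, measureReal_def]
      _ = ∫ z, ℓ k (z : EuclideanSpace ℝ (Fin N)) ∂(μk k) + 2 * C * δ * (ν (U k)).toReal := by
          rw [hmom k (ℓ k)]
      _ ≤ ∫ z, p (z : EuclideanSpace ℝ (Fin N)) ∂(μk k) + 2 * C * δ * (ν (U k)).toReal := by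
          refine add_le_add_left (integral_mono (hint _ (hℓcont k) _ inferInstance)
            (hint _ hpcont _ inferInstance) fun z => hℓle k _) _
  have hcover_int : ∫ z, p (z : EuclideanSpace ℝ (Fin N)) ∂ν
      = ∑ k, ∫ z in U k, p (z : EuclideanSpace ℝ (Fin N)) ∂ν := by
    rw [← setIntegral_univ, ← hUcover,
      integral_iUnion hUmeas hUdisj (hUcover ▸ (hint _ hpcont ν inferInstance).integrableOn),
      tsum_fintype]
  have hsum_meas : ∑ k, (ν (U k)).toReal = B := by
    have h1 : ν (⋃ k, U k) = ∑' k, ν (U k) := measure_iUnion hUdisj hUmeas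
    rw [hUcover] at h1
    rw [← ENNReal.toReal_sum (fun a _ => measure_ne_top ν _), ← h1.trans (tsum_fintype _)]
  calc ∫ z, p (z : EuclideanSpace ℝ (Fin N)) ∂ν
      = ∑ k, ∫ z in U k, p (z : EuclideanSpace ℝ (Fin N)) ∂ν := hcover_int
    _ ≤ ∑ k, (∫ z, p (z : EuclideanSpace ℝ (Fin N)) ∂(μk k) + 2 * C * δ * (ν (U k)).toReal) :=
        Finset.sum_le_sum fun k _ => key k
    _ = (∑ k, ∫ z, p (z : EuclideanSpace ℝ (Fin N)) ∂(μk k)) + 2 * C * δ * B := by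
        rw [Finset.sum_add_distrib, ← Finset.mul_sum, hsum_meas]
    _ = ∫ z, p (z : EuclideanSpace ℝ (Fin N)) ∂μ + 2 * C * δ * B := by
        rw [hμsum, integral_finset_sum_measure fun k _ => hint _ hpcont _ (hμkfin k)]
    _ ≤ ∫ z, p (z : EuclideanSpace ℝ (Fin N)) ∂μ + ε := by linarith
end

section
/- Let N ≥ 1 and let μ and ν be finite Borel measures on the unit sphere S^{N-1} of Euclidean space ℝ^N such that ∫_{S^{N-1}} p dμ ≥ ∫_{S^{N-1}} p dν for every sublinear functional p : ℝ^N → ℝ. Then μ linearly majorizes ν. (Converse of Reshetnyak's theorem.) -/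
open MeasureTheory

section pmax
variable {E : Type*} [NormedAddCommGroup E] [NormedSpace ℝ E] {m : ℕ}

/-- max of finitely many continuous linear functionals -/
noncomputable def pmax (hm : m ≠ 0) (L : Fin m → (E →L[ℝ] ℝ)) (x : E) : ℝ :=
  Finset.univ.sup'
    (by have : Nonempty (Fin m) := ⟨⟨0, Nat.pos_of_ne_zero hm⟩⟩; exact Finset.univ_nonempty)
    (fun k => L k x)

variable (hm : m ≠ 0) (L : Fin m → (E →L[ℝ] ℝ))

lemma le_pmax (k : Fin m) (x : E) : L k x ≤ pmax hm L x :=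
  Finset.le_sup' (fun k => L k x) (Finset.mem_univ k)

lemma exists_eq_pmax (x : E) : ∃ k, L k x = pmax hm L x := by
  obtain ⟨k, _, hk⟩ := Finset.exists_mem_eq_sup'
    (by have : Nonempty (Fin m) := ⟨⟨0, Nat.pos_of_ne_zero hm⟩⟩; exact Finset.univ_nonempty)
    (fun k => L k x)
  exact ⟨k, hk.symm⟩

lemma pmax_le {x : E} {a : ℝ} (h : ∀ k, L k x ≤ a) : pmax hm L x ≤ a :=
  Finset.sup'_le _ _ fun k _ => h k

lemma pmax_add (x y : E) : pmax hm L (x + y) ≤ pmax hm L x + pmax hm L y := by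
  refine pmax_le hm L fun k => ?_
  rw [(L k).map_add]
  exact add_le_add (le_pmax hm L k x) (le_pmax hm L k y)

lemma pmax_smul {t : ℝ} (ht : 0 ≤ t) (x : E) : pmax hm L (t • x) = t * pmax hm L x := by
  rcases eq_or_lt_of_le ht with h | h
  · obtain ⟨k, hk⟩ := exists_eq_pmax hm L (t • x)
    subst h
    rw [← hk]
    rw [zero_smul, (L k).map_zero, zero_mul]
  · apply le_antisymm
    · refine pmax_le hm L fun k => ?_
      rw [(L k).map_smul, smul_eq_mul]
      exact mul_le_mul_of_nonneg_left (le_pmax hm L k x) ht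
    · obtain ⟨k, hk⟩ := exists_eq_pmax hm L x
      calc t * pmax hm L x = L k (t • x) := by rw [(L k).map_smul, smul_eq_mul, ← hk]
      _ ≤ _ := le_pmax hm L k _

lemma pmax_continuous : Continuous (pmax hm L) :=
  Continuous.finset_sup'_apply _ fun k _ => (L k).continuous

end pmax

section helpers
variable {S : Type*} [TopologicalSpace S] [CompactSpace S] [MeasurableSpace S]
  [OpensMeasurableSpace S] [SecondCountableTopology S] (μ : Measure S) [IsFiniteMeasure μ]
variable {F : Type*} [NormedAddCommGroup F]

lemma integrable_of_cont {f : S → F} (hf : Continuous f) : Integrable f μ := by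
  obtain ⟨C, hC⟩ := (isCompact_univ (X := S)).exists_bound_of_continuousOn hf.continuousOn
  exact Integrable.mono' (integrable_const C) hf.aestronglyMeasurable
    (Filter.Eventually.of_forall fun z => hC z (Set.mem_univ z))

lemma memL2_of_cont {f : S → F} (hf : Continuous f) : MemLp f 2 μ := by
  obtain ⟨C, hC⟩ := (isCompact_univ (X := S)).exists_bound_of_continuousOn hf.continuousOn
  exact MemLp.of_bound hf.aestronglyMeasurable C
    (Filter.Eventually.of_forall fun z => hC z (Set.mem_univ z))

variable [NormedSpace ℝ F]

omit [TopologicalSpace S] [CompactSpace S] [OpensMeasurableSpace S] [SecondCountableTopology S] [IsFiniteMeasure μ] in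
lemma integral_partition {m : ℕ} {A : Fin m → Set S} (hA : ∀ k, MeasurableSet (A k))
    (hd : Pairwise fun i j => Disjoint (A i) (A j)) (hU : (⋃ k, A k) = Set.univ)
    {f : S → F} (hf : Integrable f μ) :
    ∫ z, f z ∂μ = ∑ k, ∫ z in A k, f z ∂μ := by
  rw [← setIntegral_univ, ← hU, ← Set.biUnion_univ (s := A), ← Finset.coe_univ]
  exact integral_biUnion_finset _ (fun i _ => hA i)
    (fun i _ j _ hij => hd hij) (fun i _ => hf.integrableOn)

end helpers

lemma norm_coe_unitSphere {N : ℕ} (z : Metric.sphere (0 : EuclideanSpace ℝ (Fin N)) 1) :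
    ‖(z : EuclideanSpace ℝ (Fin N))‖ = 1 := by
  have := z.2
  rwa [mem_sphere_iff_norm, sub_zero] at this

lemma Lp_coeFn_finset_sum {α : Type*} [MeasurableSpace α] {μ : Measure α} {p : ENNReal}
    {ι : Type*} (s : Finset ι) (f : ι → MeasureTheory.Lp ℝ p μ) :
    ⇑(∑ i ∈ s, f i) =ᵐ[μ] fun z => ∑ i ∈ s, f i z := by
  classical
  induction s using Finset.induction with
  | empty => simp only [Finset.sum_empty]; exact MeasureTheory.Lp.coeFn_zero ℝ p μ
  | @insert a s ha ih =>
    rw [Finset.sum_insert ha]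
    filter_upwards [MeasureTheory.Lp.coeFn_add (f a) (∑ i ∈ s, f i), ih] with z h1 h2
    rw [h1]
    simp only [Pi.add_apply, h2, Finset.sum_insert ha]

section core
variable {N m : ℕ}

set_option maxHeartbeats 2000000 in
theorem core_exists (hNe : Nonempty (Fin N)) (hm : m ≠ 0)
    (μ ν : Measure (UnitSphere N)) [IsFiniteMeasure μ] [IsFiniteMeasure ν]
    (hint : ∀ p : EuclideanSpace ℝ (Fin N) → ℝ,
      (∀ t : ℝ, 0 ≤ t → ∀ x, p (t • x) = t * p x) →
      (∀ x y, p (x + y) ≤ p x + p y) →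
      ∫ z, p (z : EuclideanSpace ℝ (Fin N)) ∂ν
        ≤ ∫ z, p (z : EuclideanSpace ℝ (Fin N)) ∂μ)
    (U : Fin m → Set (UnitSphere N)) (hUm : ∀ k, MeasurableSet (U k))
    (hUd : Pairwise fun i j => Disjoint (U i) (U j)) (hUu : (⋃ k, U k) = Set.univ) :
    ∃ μk : Fin m → Measure (UnitSphere N),
      (∀ k, IsFiniteMeasure (μk k)) ∧
      μ = ∑ k, μk k ∧
      ∀ (k : Fin m) (ℓ : EuclideanSpace ℝ (Fin N) →L[ℝ] ℝ),
        ∫ z, ℓ (z : EuclideanSpace ℝ (Fin N)) ∂(μk k)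
          = ∫ z in U k, ℓ (z : EuclideanSpace ℝ (Fin N)) ∂ν := by
  classical
  -- coordinate functions as L² elements
  have hcont_coord : ∀ i : Fin N, Continuous fun z : UnitSphere N => (z : EuclideanSpace ℝ (Fin N)) i :=
    fun i => (EuclideanSpace.proj i).continuous.comp continuous_subtype_val
  set ci : Fin N → Lp ℝ 2 μ := fun i => MemLp.toLp _ (memL2_of_cont μ (hcont_coord i)) with hci
  -- the moment map
  set Φ : (Fin m → WeakDual ℝ (Lp ℝ 2 μ)) → (Fin m → EuclideanSpace ℝ (Fin N)) :=
    fun φ k => ∑ i, φ k (ci i) • EuclideanSpace.single i (1 : ℝ) with hΦ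
  have hΦcont : Continuous Φ := by
    refine continuous_pi fun k => ?_
    exact continuous_finset_sum _ fun i _ =>
      (Continuous.smul (f := fun a : Fin m → WeakDual ℝ (Lp ℝ 2 μ) => (a k) (ci i))
        ((WeakDual.eval_continuous (ci i)).comp (continuous_apply k)) continuous_const)
  set R : ℝ := (μ Set.univ).toReal ^ (1 / (2:ℝ)) with hR
  -- the constraint set
  set C : Set (Fin m → WeakDual ℝ (Lp ℝ 2 μ)) :=
    {φ | (∀ k (g : Lp ℝ 2 μ), 0 ≤ᵐ[μ] ⇑g → 0 ≤ φ k g) ∧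
         (∀ g : Lp ℝ 2 μ, ∑ k, φ k g = ∫ z, g z ∂μ) ∧
         (∀ k, ‖WeakDual.toStrongDual (φ k)‖ ≤ R)} with hC
  have hCclosed : IsClosed C := by
    have h1 : IsClosed {φ : Fin m → WeakDual ℝ (Lp ℝ 2 μ) | ∀ k (g : Lp ℝ 2 μ), 0 ≤ᵐ[μ] ⇑g → 0 ≤ φ k g} := by
      have : {φ : Fin m → WeakDual ℝ (Lp ℝ 2 μ) | ∀ k (g : Lp ℝ 2 μ), 0 ≤ᵐ[μ] ⇑g → 0 ≤ φ k g}
          = ⋂ k, ⋂ g : Lp ℝ 2 μ, ⋂ (_ : 0 ≤ᵐ[μ] ⇑g), {φ | 0 ≤ φ k g} := by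
        ext φ; simp [Set.mem_iInter]
      rw [this]
      exact isClosed_iInter fun k => isClosed_iInter fun g => isClosed_iInter fun _ =>
        isClosed_le continuous_const ((WeakDual.eval_continuous g).comp (continuous_apply k))
    have h2 : IsClosed {φ : Fin m → WeakDual ℝ (Lp ℝ 2 μ) | ∀ g : Lp ℝ 2 μ, ∑ k, φ k g = ∫ z, g z ∂μ} := by
      have : {φ : Fin m → WeakDual ℝ (Lp ℝ 2 μ) | ∀ g : Lp ℝ 2 μ, ∑ k, φ k g = ∫ z, g z ∂μ}
          = ⋂ g : Lp ℝ 2 μ, {φ | ∑ k, φ k g = ∫ z, g z ∂μ} := by ext φ; simp [Set.mem_iInter]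
      rw [this]
      exact isClosed_iInter fun g => isClosed_eq
        (continuous_finset_sum _ fun k _ => (WeakDual.eval_continuous g).comp (continuous_apply k))
        continuous_const
    have h3 : IsClosed {φ : Fin m → WeakDual ℝ (Lp ℝ 2 μ) | ∀ k, ‖WeakDual.toStrongDual (φ k)‖ ≤ R} := by
      have : {φ : Fin m → WeakDual ℝ (Lp ℝ 2 μ) | ∀ k, ‖WeakDual.toStrongDual (φ k)‖ ≤ R}
          = ⋂ k, (fun φ : Fin m → WeakDual ℝ (Lp ℝ 2 μ) => φ k) ⁻¹'
              (WeakDual.toStrongDual ⁻¹' Metric.closedBall 0 R) := by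
        ext φ
        simp [Set.mem_iInter, Metric.mem_closedBall, dist_zero_right]
      rw [this]
      exact isClosed_iInter fun k =>
        (WeakDual.isClosed_closedBall 0 R).preimage (continuous_apply k)
    have : C = _ ∩ (_ ∩ _) := rfl
    rw [this]
    exact h1.inter (h2.inter h3)
  have hCcompact : IsCompact C := by
    have hball : IsCompact (Set.univ.pi fun _ : Fin m =>
        (WeakDual.toStrongDual ⁻¹' Metric.closedBall (0 : StrongDual ℝ ↥(Lp ℝ 2 μ)) R)) :=
      isCompact_univ_pi fun k => WeakDual.isCompact_closedBall (𝕜 := ℝ) (E := ↥(Lp ℝ 2 μ)) 0 R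
    refine IsCompact.of_isClosed_subset hball hCclosed ?_
    intro φ hφ
    rw [Set.mem_univ_pi]
    intro k
    simpa [Metric.mem_closedBall, dist_zero_right] using hφ.2.2 k
  have hCconvex : Convex ℝ C := by
    intro φ hφ ψ hψ a b ha hb hab
    refine ⟨fun k g hg => ?_, fun g => ?_, fun k => ?_⟩
    · have : (a • φ + b • ψ) k g = a * φ k g + b * ψ k g := rfl
      rw [this]
      exact add_nonneg (mul_nonneg ha (hφ.1 k g hg)) (mul_nonneg hb (hψ.1 k g hg))
    · calc ∑ k, (a • φ + b • ψ) k g = ∑ k, (a * φ k g + b * ψ k g) := rfl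
        _ = a * ∑ k, φ k g + b * ∑ k, ψ k g := by
            rw [Finset.sum_add_distrib, Finset.mul_sum, Finset.mul_sum]
        _ = (a + b) * ∫ z, g z ∂μ := by rw [hφ.2.1 g, hψ.2.1 g]; ring
        _ = ∫ z, g z ∂μ := by rw [hab, one_mul]
    · have : WeakDual.toStrongDual ((a • φ + b • ψ) k)
          = a • WeakDual.toStrongDual (φ k) + b • WeakDual.toStrongDual (ψ k) := rfl
      rw [this]
      calc ‖a • WeakDual.toStrongDual (φ k) + b • WeakDual.toStrongDual (ψ k)‖
          ≤ ‖a • WeakDual.toStrongDual (φ k)‖ + ‖b • WeakDual.toStrongDual (ψ k)‖ := norm_add_le _ _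
        _ ≤ a * R + b * R := by
            rw [norm_smul, norm_smul, Real.norm_eq_abs, abs_of_nonneg ha,
              Real.norm_eq_abs, abs_of_nonneg hb]
            exact add_le_add (mul_le_mul_of_nonneg_left (hφ.2.2 k) ha)
              (mul_le_mul_of_nonneg_left (hψ.2.2 k) hb)
        _ = R := by rw [← add_mul, hab, one_mul]
  -- the vector of target first moments
  set b : Fin m → EuclideanSpace ℝ (Fin N) :=
    fun k => ∫ z in U k, (z : EuclideanSpace ℝ (Fin N)) ∂ν with hb
  -- basic facts
  have hrepr : ∀ x : EuclideanSpace ℝ (Fin N),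
      ∑ i, x i • EuclideanSpace.single i (1:ℝ) = x := fun x => by
    have h := (EuclideanSpace.basisFun (Fin N) ℝ).sum_repr x
    simp only [EuclideanSpace.basisFun_apply, EuclideanSpace.basisFun_repr] at h
    exact h
  have hpair : ∀ f g : Lp ℝ 2 μ, (inner ℝ f g : ℝ) = ∫ z, f z * g z ∂μ := fun f g => by
    rw [L2.inner_def]
    simp only [RCLike.inner_apply, starRingEnd_apply, star_trivial]
    exact integral_congr_ae (Filter.Eventually.of_forall fun z => mul_comm _ _)
  -- the key step : b is in the image of C
  have hbK : b ∈ Φ '' C := by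
    by_contra hbn
    have hK : IsCompact (Φ '' C) := hCcompact.image hΦcont
    have hKconv : Convex ℝ (Φ '' C) := by
      rintro x ⟨φ₁, hφ₁, rfl⟩ y ⟨φ₂, hφ₂, rfl⟩ a a' ha ha' haa
      refine ⟨a • φ₁ + a' • φ₂, hCconvex hφ₁ hφ₂ ha ha' haa, ?_⟩
      funext k
      have happ : ∀ i : Fin N, ((a • φ₁ + a' • φ₂) k) (ci i)
          = a * (φ₁ k) (ci i) + a' * (φ₂ k) (ci i) := fun i => rfl
      calc Φ (a • φ₁ + a' • φ₂) k
          = ∑ i, (a * (φ₁ k) (ci i) + a' * (φ₂ k) (ci i)) • EuclideanSpace.single i (1:ℝ) := by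
            rw [hΦ]
            exact Finset.sum_congr rfl fun i _ => by rw [happ i]
        _ = a • Φ φ₁ k + a' • Φ φ₂ k := by
            rw [hΦ]
            simp only [add_smul, mul_smul, Finset.sum_add_distrib, Finset.smul_sum]
        _ = (a • Φ φ₁ + a' • Φ φ₂) k := rfl
    obtain ⟨f, u, hfu, hub⟩ := geometric_hahn_banach_closed_point hKconv hK.isClosed hbn
    -- the component functionals of f
    set ℓk : Fin m → (EuclideanSpace ℝ (Fin N) →L[ℝ] ℝ) := fun k =>
      f.comp (LinearMap.toContinuousLinearMap
        (LinearMap.single ℝ (fun _ : Fin m => EuclideanSpace ℝ (Fin N)) k)) with hℓk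
    have hfdec : ∀ x : Fin m → EuclideanSpace ℝ (Fin N), f x = ∑ k, ℓk k (x k) := fun x => by
      conv_lhs => rw [show x = ∑ k, Pi.single k (x k) from (Finset.univ_sum_single x).symm]
      rw [map_sum]
      exact Finset.sum_congr rfl fun k _ => rfl
    have hcontp : Continuous fun z : UnitSphere N =>
        pmax hm ℓk (z : EuclideanSpace ℝ (Fin N)) :=
      (pmax_continuous hm ℓk).comp continuous_subtype_val
    -- the argmax partition
    set Q : Fin m → Set (UnitSphere N) := fun j =>
      {z | ℓk j (z : EuclideanSpace ℝ (Fin N)) = pmax hm ℓk (z : EuclideanSpace ℝ (Fin N))}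
      with hQ
    have hQmeas : ∀ j, MeasurableSet (Q j) := fun j =>
      (isClosed_eq ((ℓk j).continuous.comp continuous_subtype_val) hcontp).measurableSet
    set A : Fin m → Set (UnitSphere N) :=
      fun k => Q k \ ⋃ (j : Fin m), ⋃ (_ : j < k), Q j with hA
    have hAmeas : ∀ k, MeasurableSet (A k) := fun k =>
      (hQmeas k).diff (MeasurableSet.iUnion fun j => MeasurableSet.iUnion fun _ => hQmeas j)
    have hAdisj : Pairwise fun i j => Disjoint (A i) (A j) := by
      intro i j hij
      rcases lt_or_gt_of_ne hij with h | h
      · rw [Set.disjoint_left]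
        rintro z ⟨hzQ, -⟩ ⟨-, hzn⟩
        exact hzn (Set.mem_iUnion₂.mpr ⟨i, h, hzQ⟩)
      · rw [Set.disjoint_left]
        rintro z ⟨-, hzn⟩ ⟨hzQ, -⟩
        exact hzn (Set.mem_iUnion₂.mpr ⟨j, h, hzQ⟩)
    have hAcover : (⋃ k, A k) = Set.univ := by
      ext z
      simp only [Set.mem_iUnion, Set.mem_univ, iff_true]
      set T := Finset.univ.filter (fun j : Fin m =>
        ℓk j (z : EuclideanSpace ℝ (Fin N)) = pmax hm ℓk (z : EuclideanSpace ℝ (Fin N))) with hT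
      have hTne : T.Nonempty := by
        obtain ⟨k0, hk0⟩ := exists_eq_pmax hm ℓk (z : EuclideanSpace ℝ (Fin N))
        exact ⟨k0, by simp [hT, hk0]⟩
      refine ⟨T.min' hTne, ?_, ?_⟩
      · exact (Finset.mem_filter.mp (T.min'_mem hTne)).2
      · intro hmem
        obtain ⟨j, hj⟩ := Set.mem_iUnion.mp hmem
        obtain ⟨hjlt, hzQ⟩ := Set.mem_iUnion.mp hj
        have hle : T.min' hTne ≤ j :=
          T.min'_le j (Finset.mem_filter.mpr ⟨Finset.mem_univ j, hzQ⟩)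
        exact absurd hjlt (not_lt.mpr hle)
    -- the competitor built from the argmax partition
    set χA : Fin m → Lp ℝ 2 μ :=
      fun k => indicatorConstLp 2 (hAmeas k) (measure_ne_top μ _) (1:ℝ) with hχA
    set φs : Fin m → WeakDual ℝ ↥(Lp ℝ 2 μ) :=
      fun k => StrongDual.toWeakDual (innerSL ℝ (χA k)) with hφs
    have hφs_apply : ∀ (k) (g : Lp ℝ 2 μ), φs k g = (inner ℝ (χA k) g : ℝ) := fun k g => rfl
    have hχ_int : ∀ (k) (g : Lp ℝ 2 μ),
        (inner ℝ (χA k) g : ℝ) = ∫ z in A k, g z ∂μ := by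
      intro k g
      rw [hpair]
      calc ∫ z, χA k z * g z ∂μ = ∫ z, (A k).indicator (⇑g) z ∂μ := by
            refine integral_congr_ae ?_
            filter_upwards [indicatorConstLp_coeFn (p := 2) (hs := hAmeas k)
              (hμs := measure_ne_top μ (A k)) (c := (1:ℝ)) (μ := μ)] with z hz
            rw [hz]
            by_cases h : z ∈ A k <;> simp [h]
        _ = _ := integral_indicator (hAmeas k)
    have hφsC : φs ∈ C := by
      refine ⟨?_, ?_, ?_⟩
      · intro k g hg
        rw [hφs_apply, hpair]
        refine integral_nonneg_of_ae ?_
        filter_upwards [indicatorConstLp_coeFn (p := 2) (hs := hAmeas k)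
          (hμs := measure_ne_top μ (A k)) (c := (1:ℝ)) (μ := μ), hg] with z h1 h2
        rw [h1]
        by_cases h : z ∈ A k
        · simpa [h] using h2
        · simp [h]
      · intro g
        have h1 : ∀ k : Fin m, φs k g = ∫ z in A k, g z ∂μ := fun k => by
          rw [hφs_apply, hχ_int]
        rw [Finset.sum_congr rfl fun k _ => h1 k]
        exact (integral_partition μ hAmeas hAdisj hAcover
          (MemLp.integrable one_le_two (Lp.memLp g))).symm
      · intro k
        have h1 : ‖WeakDual.toStrongDual (φs k)‖ = ‖innerSL ℝ (χA k)‖ := rfl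
        have h2 : ‖innerSL ℝ (χA k)‖ ≤ ‖χA k‖ :=
          (innerSL ℝ (χA k)).opNorm_le_bound (norm_nonneg _) fun g => by
            rw [innerSL_apply_apply]
            exact norm_inner_le_norm _ _
        have h3 : ‖χA k‖ ≤ R := by
          rw [hχA]
          rw [norm_indicatorConstLp (by norm_num) (by norm_num)]
          rw [hR]
          simp only [norm_one, one_mul, ENNReal.toReal_ofNat]
          refine Real.rpow_le_rpow ENNReal.toReal_nonneg ?_ (by norm_num)
          exact ENNReal.toReal_mono (measure_ne_top μ _) (measure_mono (Set.subset_univ _))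
        rw [h1]
        exact h2.trans h3
    -- the chain of (in)equalities leading to a contradiction
    have e1 : f b = ∑ k, ∫ z in U k, ℓk k (z : EuclideanSpace ℝ (Fin N)) ∂ν := by
      rw [hfdec b]
      refine Finset.sum_congr rfl fun k _ => ?_
      rw [hb]
      exact (ContinuousLinearMap.integral_comp_comm (ℓk k)
        ((integrable_of_cont ν continuous_subtype_val).integrableOn)).symm
    have e2 : ∑ k, ∫ z in U k, ℓk k (z : EuclideanSpace ℝ (Fin N)) ∂ν
        ≤ ∑ k, ∫ z in U k, pmax hm ℓk (z : EuclideanSpace ℝ (Fin N)) ∂ν :=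
      Finset.sum_le_sum fun k _ => setIntegral_mono_on
        ((integrable_of_cont ν ((ℓk k).continuous.comp continuous_subtype_val)).integrableOn)
        ((integrable_of_cont ν hcontp).integrableOn) (hUm k)
        (fun z _ => le_pmax hm ℓk k _)
    have e3 : ∑ k, ∫ z in U k, pmax hm ℓk (z : EuclideanSpace ℝ (Fin N)) ∂ν
        = ∫ z, pmax hm ℓk (z : EuclideanSpace ℝ (Fin N)) ∂ν :=
      (integral_partition ν hUm hUd hUu (integrable_of_cont ν hcontp)).symm
    have e4 : ∫ z, pmax hm ℓk (z : EuclideanSpace ℝ (Fin N)) ∂ν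
        ≤ ∫ z, pmax hm ℓk (z : EuclideanSpace ℝ (Fin N)) ∂μ :=
      hint _ (fun t ht x => pmax_smul hm ℓk ht x) (pmax_add hm ℓk)
    have e5 : ∫ z, pmax hm ℓk (z : EuclideanSpace ℝ (Fin N)) ∂μ
        = ∑ k, ∫ z in A k, pmax hm ℓk (z : EuclideanSpace ℝ (Fin N)) ∂μ :=
      integral_partition μ hAmeas hAdisj hAcover (integrable_of_cont μ hcontp)
    have e6 : ∀ k, ∫ z in A k, pmax hm ℓk (z : EuclideanSpace ℝ (Fin N)) ∂μ
        = ∫ z in A k, ℓk k (z : EuclideanSpace ℝ (Fin N)) ∂μ := fun k =>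
      setIntegral_congr_fun (hAmeas k) (fun z hz => (hz.1).symm)
    have e7 : ∀ k, ∫ z in A k, ℓk k (z : EuclideanSpace ℝ (Fin N)) ∂μ = ℓk k (Φ φs k) := by
      intro k
      have h2 : ∀ i : Fin N, φs k (ci i)
          = (∫ z in A k, (z : EuclideanSpace ℝ (Fin N)) ∂μ) i := by
        intro i
        rw [hφs_apply, hχ_int]
        have h3 : ∫ z in A k, ci i z ∂μ
            = ∫ z in A k, (z : EuclideanSpace ℝ (Fin N)) i ∂μ := by
          refine integral_congr_ae ?_
          refine ae_restrict_of_ae ?_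
          filter_upwards [MemLp.coeFn_toLp (memL2_of_cont μ (hcont_coord i))] with z hz
          rw [hci]
          exact hz
        rw [h3]
        have h4 := ContinuousLinearMap.integral_comp_comm (EuclideanSpace.proj i)
          ((integrable_of_cont μ (continuous_subtype_val :
            Continuous fun z : UnitSphere N => (z : EuclideanSpace ℝ (Fin N)))).integrableOn
              (s := A k))
        simpa [PiLp.proj_apply] using h4
      have h1 : Φ φs k = ∫ z in A k, (z : EuclideanSpace ℝ (Fin N)) ∂μ := by
        rw [hΦ]
        calc ∑ i, φs k (ci i) • EuclideanSpace.single i (1:ℝ)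
            = ∑ i, ((∫ z in A k, (z : EuclideanSpace ℝ (Fin N)) ∂μ) i)
                • EuclideanSpace.single i (1:ℝ) :=
              Finset.sum_congr rfl fun i _ => by rw [h2 i]
          _ = _ := hrepr _
      rw [h1]
      exact ContinuousLinearMap.integral_comp_comm (ℓk k)
        ((integrable_of_cont μ continuous_subtype_val).integrableOn)
    have e8 : ∑ k, ℓk k (Φ φs k) = f (Φ φs) := (hfdec (Φ φs)).symm
    have e9 : f (Φ φs) < u := hfu _ ⟨φs, hφsC, rfl⟩
    have echain : f b ≤ f (Φ φs) := by
      rw [e1, ← e8]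
      calc ∑ k, ∫ z in U k, ℓk k (z : EuclideanSpace ℝ (Fin N)) ∂ν
          ≤ ∫ z, pmax hm ℓk (z : EuclideanSpace ℝ (Fin N)) ∂ν := by rw [← e3]; exact e2
        _ ≤ ∫ z, pmax hm ℓk (z : EuclideanSpace ℝ (Fin N)) ∂μ := e4
        _ = ∑ k, ℓk k (Φ φs k) := by
            rw [e5]
            exact Finset.sum_congr rfl fun k _ => by rw [e6 k, e7 k]
    linarith
  obtain ⟨φ, hφC, hφb⟩ := hbK
  -- Riesz representatives of the φ k
  set fk : Fin m → Lp ℝ 2 μ := fun k =>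
    (InnerProductSpace.toDual ℝ (Lp ℝ 2 μ)).symm (WeakDual.toStrongDual (φ k)) with hfk
  have hfk_inner : ∀ k (g : Lp ℝ 2 μ), (inner ℝ (fk k) g : ℝ) = φ k g := fun k g =>
    InnerProductSpace.toDual_symm_apply
  have hfk_int : ∀ k, Integrable (⇑(fk k)) μ := fun k =>
    MemLp.integrable one_le_two (Lp.memLp (fk k))
  -- nonnegativity of the densities
  have hfk_nonneg : ∀ k, 0 ≤ᵐ[μ] ⇑(fk k) := by
    intro k
    refine ae_nonneg_of_forall_setIntegral_nonneg (hfk_int k) fun s hs _ => ?_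
    set g : Lp ℝ 2 μ := indicatorConstLp 2 hs (measure_ne_top μ s) (1:ℝ) with hg
    have hgcoe := indicatorConstLp_coeFn (p := 2) (hs := hs) (hμs := measure_ne_top μ s)
      (c := (1:ℝ)) (μ := μ)
    have hg0 : 0 ≤ᵐ[μ] ⇑g := by
      filter_upwards [hgcoe] with z hz
      rw [Pi.zero_apply, hz]
      exact Set.indicator_nonneg (fun _ _ => zero_le_one) z
    have h1 : 0 ≤ φ k g := hφC.1 k g hg0
    have h2 : φ k g = ∫ z in s, fk k z ∂μ := by
      rw [← hfk_inner k g, hpair]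
      calc ∫ z, fk k z * g z ∂μ = ∫ z, s.indicator (⇑(fk k)) z ∂μ := by
            refine integral_congr_ae ?_
            filter_upwards [hgcoe] with z hz
            rw [hz]
            by_cases h : z ∈ s <;> simp [h]
        _ = _ := integral_indicator hs
    linarith
  -- the constant-one element of L²
  set oneL : Lp ℝ 2 μ :=
    MemLp.toLp (fun _ => (1:ℝ)) (memL2_of_cont μ continuous_const) with honeL
  have honepair : ∀ g : Lp ℝ 2 μ, (inner ℝ oneL g : ℝ) = ∫ z, g z ∂μ := fun g => by
    rw [hpair]
    refine integral_congr_ae ?_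
    filter_upwards [MemLp.coeFn_toLp (memL2_of_cont μ continuous_const :
      MemLp (fun _ : UnitSphere N => (1:ℝ)) 2 μ)] with z hz
    rw [honeL, hz, one_mul]
  -- the densities sum to one
  have hsum1 : (∑ k, fk k) = oneL := by
    have key : ∀ g : Lp ℝ 2 μ, (inner ℝ ((∑ k, fk k) - oneL) g : ℝ) = 0 := fun g => by
      rw [inner_sub_left, sum_inner]
      simp only [hfk_inner, honepair]
      rw [hφC.2.1 g, sub_self]
    have h0 := key ((∑ k, fk k) - oneL)
    rw [inner_self_eq_zero] at h0
    exact sub_eq_zero.mp h0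
  have hae_one : ∀ᵐ z ∂μ, ∑ k, fk k z = 1 := by
    have h1 := Lp_coeFn_finset_sum (Finset.univ) fk
    rw [hsum1] at h1
    filter_upwards [h1.symm, MemLp.coeFn_toLp (memL2_of_cont μ continuous_const :
      MemLp (fun _ : UnitSphere N => (1:ℝ)) 2 μ)] with z hz h2
    rw [hz, h2]
  -- measurable representatives
  set F : Fin m → (UnitSphere N → ℝ) :=
    fun k => (Lp.aestronglyMeasurable (fk k)).mk _ with hF
  have hFmeas : ∀ k, Measurable (F k) := fun k =>
    (Lp.aestronglyMeasurable (fk k)).stronglyMeasurable_mk.measurable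
  have hFae : ∀ k, ⇑(fk k) =ᵐ[μ] F k := fun k => (Lp.aestronglyMeasurable (fk k)).ae_eq_mk
  -- the decomposition measures
  set μk : Fin m → Measure (UnitSphere N) :=
    fun k => μ.withDensity fun z => ENNReal.ofReal (F k z) with hμk
  refine ⟨μk, ?_, ?_, ?_⟩
  · -- finiteness
    intro k
    constructor
    rw [hμk]
    rw [withDensity_apply _ MeasurableSet.univ, setLIntegral_univ]
    calc ∫⁻ z, ENNReal.ofReal (F k z) ∂μ
        = ∫⁻ z, ENNReal.ofReal (fk k z) ∂μ := by
          refine lintegral_congr_ae ?_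
          filter_upwards [hFae k] with z hz
          rw [hz]
      _ ≤ ∫⁻ z, ↑‖fk k z‖₊ ∂μ := by
          refine lintegral_mono fun z => ?_
          rw [← enorm_eq_nnnorm, Real.enorm_eq_ofReal_abs]
          exact ENNReal.ofReal_le_ofReal (le_abs_self _)
      _ < ⊤ := (hfk_int k).hasFiniteIntegral
  · -- the measures sum to μ
    have hae_sum1 : ∀ᵐ z ∂μ, ∑ k, ENNReal.ofReal (F k z) = 1 := by
      filter_upwards [hae_one, ae_all_iff.mpr hFae, ae_all_iff.mpr hfk_nonneg] with z h1 h2 h3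
      have hnn : ∀ k ∈ Finset.univ, 0 ≤ F k z := fun k _ => by
        rw [← h2 k]; exact h3 k
      rw [← ENNReal.ofReal_sum_of_nonneg hnn]
      have : ∑ k, F k z = ∑ k, fk k z := by
        refine Finset.sum_congr rfl fun k _ => (h2 k).symm
      rw [this, h1, ENNReal.ofReal_one]
    refine Measure.ext fun s hs => ?_
    rw [Measure.finset_sum_apply]
    calc μ s = ∫⁻ z in s, 1 ∂μ := (setLIntegral_one s).symm
      _ = ∫⁻ z in s, ∑ k, ENNReal.ofReal (F k z) ∂μ := by
          refine lintegral_congr_ae ?_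
          exact (ae_restrict_of_ae hae_sum1).mono fun z hz => hz.symm
      _ = ∑ k, ∫⁻ z in s, ENNReal.ofReal (F k z) ∂μ :=
          lintegral_finset_sum _ fun k _ => (hFmeas k).ennreal_ofReal
      _ = ∑ k, μk k s := by
          refine Finset.sum_congr rfl fun k _ => ?_
          rw [hμk, withDensity_apply _ hs]
  · -- the moments
    intro k ℓ
    have hcontℓ : Continuous fun z : UnitSphere N => ℓ (z : EuclideanSpace ℝ (Fin N)) :=
      ℓ.continuous.comp continuous_subtype_val
    set Lℓ : Lp ℝ 2 μ := MemLp.toLp _ (memL2_of_cont μ hcontℓ) with hLℓ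
    -- step 1 : ∫ ℓ dμk = φ k Lℓ
    have step1 : ∫ z, ℓ (z : EuclideanSpace ℝ (Fin N)) ∂(μk k) = φ k Lℓ := by
      have hwd : ∫ z, ℓ (z : EuclideanSpace ℝ (Fin N)) ∂(μk k)
          = ∫ z, (Real.toNNReal (F k z) : ℝ) • ℓ (z : EuclideanSpace ℝ (Fin N)) ∂μ := by
        rw [hμk]
        exact integral_withDensity_eq_integral_smul (hFmeas k).real_toNNReal _
      rw [hwd, ← hfk_inner k Lℓ, hpair]
      refine integral_congr_ae ?_
      filter_upwards [hFae k, hfk_nonneg k,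
        MemLp.coeFn_toLp (memL2_of_cont μ hcontℓ)] with z h1 h2 h3
      have h4 : (0:ℝ) ≤ F k z := by rw [← h1]; exact h2
      rw [smul_eq_mul, Real.coe_toNNReal _ h4, ← h1, h3]
    -- step 2 : Lℓ as a combination of coordinates
    have step2 : Lℓ = ∑ i, ℓ (EuclideanSpace.single i (1:ℝ)) • ci i := by
      refine (Lp.ext ?_).symm
      have h1 := Lp_coeFn_finset_sum Finset.univ
        (fun i => ℓ (EuclideanSpace.single i (1:ℝ)) • ci i)
      have h2 : ∀ᵐ z ∂μ, ∀ i : Fin N,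
          (ℓ (EuclideanSpace.single i (1:ℝ)) • ci i) z
            = ℓ (EuclideanSpace.single i (1:ℝ)) * (z : EuclideanSpace ℝ (Fin N)) i := by
        rw [ae_all_iff]
        intro i
        filter_upwards [Lp.coeFn_smul (ℓ (EuclideanSpace.single i (1:ℝ))) (ci i),
          MemLp.coeFn_toLp (memL2_of_cont μ (hcont_coord i))] with z hz1 hz2
        rw [hz1, Pi.smul_apply, smul_eq_mul]
        congr 1
      filter_upwards [h1, h2, MemLp.coeFn_toLp (memL2_of_cont μ hcontℓ)] with z hz1 hz2 hz3
      rw [hz1, hz3]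
      calc ∑ i, (ℓ (EuclideanSpace.single i (1:ℝ)) • ci i) z
          = ∑ i, (z : EuclideanSpace ℝ (Fin N)) i * ℓ (EuclideanSpace.single i (1:ℝ)) := by
            refine Finset.sum_congr rfl fun i _ => ?_
            rw [hz2 i, mul_comm]
        _ = ℓ (z : EuclideanSpace ℝ (Fin N)) := by
            conv_rhs => rw [← hrepr (z : EuclideanSpace ℝ (Fin N))]
            rw [map_sum]
            refine Finset.sum_congr rfl fun i _ => ?_
            rw [ℓ.map_smul, smul_eq_mul]
    -- step 3 : φ k Lℓ = ℓ (b k)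
    have step3 : φ k Lℓ = ℓ (b k) := by
      rw [step2, map_sum]
      have hsm : ∀ i : Fin N, φ k (ℓ (EuclideanSpace.single i (1:ℝ)) • ci i)
          = ℓ (EuclideanSpace.single i (1:ℝ)) * φ k (ci i) := fun i => by
        rw [_root_.map_smul, smul_eq_mul]
      rw [Finset.sum_congr rfl fun i _ => hsm i]
      have hb' : Φ φ k = b k := by rw [hφb]
      rw [← hb', hΦ]
      rw [map_sum]
      refine Finset.sum_congr rfl fun i _ => ?_
      rw [ℓ.map_smul, smul_eq_mul, mul_comm]
    -- step 4 : ℓ (b k) is the target set integral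
    have step4 : ℓ (b k) = ∫ z in U k, ℓ (z : EuclideanSpace ℝ (Fin N)) ∂ν := by
      rw [hb]
      exact (ContinuousLinearMap.integral_comp_comm ℓ
        ((integrable_of_cont ν continuous_subtype_val).integrableOn)).symm
    rw [step1, step3, step4]

end core

/-- **Converse of Reshetnyak's theorem.** If `∫ p dμ ≥ ∫ p dν` for every sublinear
functional `p : ℝ^N → ℝ`, then `μ` linearly majorizes `ν` on the unit sphere. -/
theorem linMaj_of_reshetnyak {N : ℕ} (hN : 1 ≤ N)
    (μ ν : Measure (UnitSphere N)) [IsFiniteMeasure μ] [IsFiniteMeasure ν]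
    (hint : ∀ p : EuclideanSpace ℝ (Fin N) → ℝ,
      (∀ t : ℝ, 0 ≤ t → ∀ x, p (t • x) = t * p x) →
      (∀ x y, p (x + y) ≤ p x + p y) →
      ∫ z, p (z : EuclideanSpace ℝ (Fin N)) ∂ν
        ≤ ∫ z, p (z : EuclideanSpace ℝ (Fin N)) ∂μ) :
    LinMaj N μ ν := by
  intro m U hUm hUd hUu
  have hNe : Nonempty (Fin N) := Fin.pos_iff_nonempty.mp hN
  rcases Nat.eq_zero_or_pos m with rfl | hmpos
  · exfalso
    have hnt : Nontrivial (EuclideanSpace ℝ (Fin N)) := inferInstance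
    have hsne : (Metric.sphere (0 : EuclideanSpace ℝ (Fin N)) 1).Nonempty :=
      NormedSpace.sphere_nonempty.mpr zero_le_one
    obtain ⟨z, hz⟩ := hsne
    have hmem : (⟨z, hz⟩ : UnitSphere N) ∈ (⋃ k : Fin 0, U k) := hUu ▸ Set.mem_univ _
    simpa using hmem
  · exact core_exists hNe hmpos.ne' μ ν hint U hUm hUd hUu
end

section
/- Let N ≥ 1 and let μ and ν be finite Borel measures on the unit sphere S^{N-1} of Euclidean space ℝ^N. Then the following are equivalent: (i) for every nonempty compact convex set K ⊆ ℝ^N with K = −K one has ∫_{S^{N-1}} h_K dμ ≥ ∫_{S^{N-1}} h_K dν, where h_K(z) = sup_{x∈K} ⟪x, z⟫; (ii) the symmetrization Sym(μ) = ½(μ + a_*μ) linearly majorizes Sym(ν) = ½(ν + a_*ν), where a_*μ denotes the pushforward of μ under the antipodal map a(z) = −z of S^{N-1}. (Symmetric dual-cone description over Minkowski balls.) -/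
open MeasureTheory

/-- The support function `h_K(z) = sup_{x ∈ K} ⟪x, z⟫` of a set `K ⊆ ℝ^N`. -/
noncomputable def suppFn {N : ℕ} (K : Set (EuclideanSpace ℝ (Fin N)))
    (z : EuclideanSpace ℝ (Fin N)) : ℝ :=
  sSup ((fun x => (inner ℝ x z : ℝ)) '' K)

/-- Symmetrization `Sym(μ) = ½ (μ + a_* μ)` of a measure on the unit sphere,
where `a(z) = -z` is the antipodal map. -/
noncomputable def symMeasure {N : ℕ} (μ : Measure (UnitSphere N)) :
    Measure (UnitSphere N) :=
  (2 : ENNReal)⁻¹ • (μ + Measure.map (fun z : UnitSphere N => -z) μ)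

/-! ### Auxiliary API -/

open Metric Set
open scoped RealInnerProductSpace ENNReal NNReal

namespace SuppFnAux

variable {N : ℕ}

section suppFnAPI
variable {K : Set (EuclideanSpace ℝ (Fin N))} {z w : EuclideanSpace ℝ (Fin N)}

lemma continuous_inner_right (z : EuclideanSpace ℝ (Fin N)) :
    Continuous fun x : EuclideanSpace ℝ (Fin N) => (inner ℝ x z : ℝ) :=
  continuous_id.inner continuous_const

lemma suppFn_bddAbove (hK : IsCompact K) :
    BddAbove ((fun x => (inner ℝ x z : ℝ)) '' K) :=
  (hK.image (continuous_inner_right z)).bddAbove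

lemma inner_le_suppFn (hK : IsCompact K) {x} (hx : x ∈ K) :
    (inner ℝ x z : ℝ) ≤ suppFn K z :=
  le_csSup (suppFn_bddAbove hK) (Set.mem_image_of_mem _ hx)

lemma suppFn_le (hne : K.Nonempty) {c : ℝ} (h : ∀ x ∈ K, (inner ℝ x z : ℝ) ≤ c) :
    suppFn K z ≤ c :=
  csSup_le (hne.image _) (by rintro y ⟨x, hx, rfl⟩; exact h x hx)

lemma exists_suppFn_eq (hne : K.Nonempty) (hK : IsCompact K) (z : EuclideanSpace ℝ (Fin N)) :
    ∃ x ∈ K, suppFn K z = (inner ℝ x z : ℝ) := by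
  obtain ⟨x, hx, hmax⟩ := hK.exists_isMaxOn hne (continuous_inner_right z).continuousOn
  refine ⟨x, hx, le_antisymm (suppFn_le ⟨x, hx⟩ fun y hy => hmax hy)
    (inner_le_suppFn hK hx)⟩

lemma suppFn_lipschitz (hne : K.Nonempty) (hK : IsCompact K) {R : ℝ}
    (hR : ∀ x ∈ K, ‖x‖ ≤ R) (z w : EuclideanSpace ℝ (Fin N)) :
    suppFn K z - suppFn K w ≤ R * ‖z - w‖ := by
  obtain ⟨x, hx, hxe⟩ := exists_suppFn_eq hne hK z
  have h1 : (inner ℝ x w : ℝ) ≤ suppFn K w := inner_le_suppFn hK hx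
  have h2 : (inner ℝ x z : ℝ) - (inner ℝ x w : ℝ) = (inner ℝ x (z - w) : ℝ) := by
    rw [inner_sub_right]
  have h3 : (inner ℝ x (z - w) : ℝ) ≤ R * ‖z - w‖ := by
    calc (inner ℝ x (z - w) : ℝ) ≤ ‖x‖ * ‖z - w‖ := real_inner_le_norm _ _
      _ ≤ R * ‖z - w‖ := by
          have := hR x hx
          have hn : (0:ℝ) ≤ ‖z - w‖ := norm_nonneg _
          nlinarith [norm_nonneg x]
  linarith [hxe]

lemma continuous_suppFn (hne : K.Nonempty) (hK : IsCompact K) :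
    Continuous (suppFn K) := by
  obtain ⟨R, hR⟩ : ∃ R : ℝ, ∀ x ∈ K, ‖x‖ ≤ R := by
    obtain ⟨R, hR⟩ := hK.isBounded.exists_norm_le
    exact ⟨R, hR⟩
  have hR0 : 0 ≤ R := le_trans (norm_nonneg _) (hR _ hne.choose_spec)
  have : LipschitzWith (Real.toNNReal R) (suppFn K) := by
    apply LipschitzWith.of_dist_le_mul
    intro z w
    rw [Real.dist_eq, dist_eq_norm]
    have h1 := suppFn_lipschitz hne hK hR z w
    have h2 := suppFn_lipschitz hne hK hR w z
    rw [abs_le]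
    have hRR : R ≤ (Real.toNNReal R : ℝ) := Real.le_coe_toNNReal R
    have hn : (0:ℝ) ≤ ‖z - w‖ := norm_nonneg _
    have hzw : ‖w - z‖ = ‖z - w‖ := norm_sub_rev _ _
    constructor <;> nlinarith [mul_le_mul_of_nonneg_right hRR hn]
  exact this.continuous

/-- support function of a polytope given by vertices. -/
lemma suppFn_convexHull_range {m : ℕ} [Nonempty (Fin m)] (x : Fin m → EuclideanSpace ℝ (Fin N))
    (z : EuclideanSpace ℝ (Fin N)) :
    suppFn (convexHull ℝ (Set.range x)) z
      = Finset.univ.sup' Finset.univ_nonempty (fun k => (inner ℝ (x k) z : ℝ)) := by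
  have hne : (convexHull ℝ (Set.range x)).Nonempty :=
    ⟨x (Classical.arbitrary _), subset_convexHull ℝ _ (Set.mem_range_self _)⟩
  have hK : IsCompact (convexHull ℝ (Set.range x)) :=
    (Set.finite_range x).isCompact_convexHull ℝ
  apply le_antisymm
  · apply suppFn_le hne
    intro y hy
    have hcv : ConvexOn ℝ Set.univ (fun y : EuclideanSpace ℝ (Fin N) => (inner ℝ y z : ℝ)) := by
      refine ⟨convex_univ, ?_⟩
      intro a _ b _ p q hp hq hpq
      simp [inner_add_left, real_inner_smul_left, Finset.mul_sum, mul_assoc]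
    obtain ⟨v, hv, hvle⟩ := hcv.exists_ge_of_mem_convexHull (Set.subset_univ _) hy
    obtain ⟨k, rfl⟩ := hv
    exact le_trans hvle (Finset.le_sup' (f := fun k => (inner ℝ (x k) z : ℝ)) (Finset.mem_univ k))
  · apply Finset.sup'_le
    intro k _
    exact inner_le_suppFn hK (subset_convexHull ℝ _ (Set.mem_range_self k))
end suppFnAPI

section symBody
variable {K : Set (EuclideanSpace ℝ (Fin N))}

/-- the symmetrized body `½ • K - ½ • K`. -/
noncomputable def symBody (K : Set (EuclideanSpace ℝ (Fin N))) :
    Set (EuclideanSpace ℝ (Fin N)) :=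
  (fun p : EuclideanSpace ℝ (Fin N) × EuclideanSpace ℝ (Fin N) =>
    (2⁻¹ : ℝ) • p.1 - (2⁻¹ : ℝ) • p.2) '' (K ×ˢ K)

lemma symBody_nonempty (hne : K.Nonempty) : (symBody K).Nonempty := by
  obtain ⟨x, hx⟩ := hne
  exact ⟨_, ⟨(x, x), Set.mk_mem_prod hx hx, rfl⟩⟩

lemma symBody_isCompact (hK : IsCompact K) : IsCompact (symBody K) :=
  (hK.prod hK).image (by fun_prop)

lemma symBody_convex (hK : Convex ℝ K) : Convex ℝ (symBody K) := by
  have := (hK.prod hK).is_linear_image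
    (((2⁻¹ : ℝ) • (LinearMap.fst ℝ (EuclideanSpace ℝ (Fin N)) (EuclideanSpace ℝ (Fin N))
      - LinearMap.snd ℝ _ _)).isLinear)
  convert this using 1
  swap
  ext y
  constructor
  · rintro ⟨p, hp, rfl⟩; exact ⟨p, hp, by simp [smul_sub]⟩
  · rintro ⟨p, hp, rfl⟩; exact ⟨p, hp, by simp [smul_sub]⟩
  · ext; rfl

lemma symBody_neg : symBody K = -(symBody K) := by
  ext y
  simp only [Set.mem_neg]
  constructor
  · rintro ⟨⟨a, b⟩, hab, rfl⟩
    refine ⟨(b, a), Set.mk_mem_prod hab.2 hab.1, ?_⟩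
    show (2⁻¹ : ℝ) • b - (2⁻¹ : ℝ) • a = -((2⁻¹ : ℝ) • a - (2⁻¹ : ℝ) • b)
    abel
  · rintro ⟨⟨a, b⟩, hab, h⟩
    refine ⟨(b, a), Set.mk_mem_prod hab.2 hab.1, ?_⟩
    have h' : (2⁻¹ : ℝ) • a - (2⁻¹ : ℝ) • b = -y := h
    show (2⁻¹ : ℝ) • b - (2⁻¹ : ℝ) • a = y
    have : y = -((2⁻¹ : ℝ) • a - (2⁻¹ : ℝ) • b) := by rw [h']; simp
    rw [this]; abel

lemma suppFn_symBody (hne : K.Nonempty) (hK : IsCompact K) (z : EuclideanSpace ℝ (Fin N)) :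
    suppFn (symBody K) z = 2⁻¹ * (suppFn K z + suppFn K (-z)) := by
  apply le_antisymm
  · apply suppFn_le (symBody_nonempty hne)
    rintro y ⟨⟨a, b⟩, hab, rfl⟩
    have h1 : (inner ℝ a z : ℝ) ≤ suppFn K z := inner_le_suppFn hK hab.1
    have h2 : (inner ℝ b (-z) : ℝ) ≤ suppFn K (-z) := inner_le_suppFn hK hab.2
    have : (inner ℝ ((2⁻¹ : ℝ) • a - (2⁻¹ : ℝ) • b) z : ℝ)
        = 2⁻¹ * ((inner ℝ a z : ℝ) + (inner ℝ b (-z) : ℝ)) := by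
      rw [inner_sub_left, real_inner_smul_left, real_inner_smul_left, inner_neg_right]
      ring
    rw [this]
    nlinarith
  · obtain ⟨a, ha, hae⟩ := exists_suppFn_eq hne hK z
    obtain ⟨b, hb, hbe⟩ := exists_suppFn_eq hne hK (-z)
    have hmem : (2⁻¹ : ℝ) • a - (2⁻¹ : ℝ) • b ∈ symBody K :=
      ⟨(a, b), Set.mk_mem_prod ha hb, rfl⟩
    have := inner_le_suppFn (z := z) (symBody_isCompact hK) hmem
    rw [inner_sub_left, real_inner_smul_left, real_inner_smul_left] at this
    have hb' : (inner ℝ b z : ℝ) = -(inner ℝ b (-z) : ℝ) := by rw [inner_neg_right]; ring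
    rw [hae, hbe]
    rw [hb'] at this
    linarith

lemma suppFn_even_of_symm (hne : K.Nonempty) (hK : IsCompact K) (hsym : K = -K)
    (z : EuclideanSpace ℝ (Fin N)) : suppFn K (-z) = suppFn K z := by
  apply le_antisymm
  · apply suppFn_le hne
    intro x hx
    have hx' : -x ∈ K := by rw [hsym]; simpa using hx
    have := inner_le_suppFn (z := z) hK hx'
    rwa [inner_neg_right, ← inner_neg_left]
  · apply suppFn_le hne
    intro x hx
    have hx' : -x ∈ K := by rw [hsym]; simpa using hx
    have := inner_le_suppFn (z := -z) hK hx'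
    rwa [inner_neg_left, inner_neg_right, neg_neg] at this
end symBody

section measures

lemma continuous_sphere_neg : Continuous fun z : UnitSphere N => -z := by
  fun_prop

lemma _root_.Continuous.integrable_sphere {f : UnitSphere N → ℝ} (hf : Continuous f)
    (μ : Measure (UnitSphere N)) [IsFiniteMeasure μ] : Integrable f μ := by
  obtain ⟨C, hC⟩ := (isCompact_range hf).isBounded.exists_norm_le
  exact MeasureTheory.memLp_one_iff_integrable.mp <|
    MeasureTheory.MemLp.of_bound hf.aestronglyMeasurable C
      (Filter.Eventually.of_forall fun z => hC _ (Set.mem_range_self z))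

instance symMeasure_finite (μ : Measure (UnitSphere N)) [IsFiniteMeasure μ] :
    IsFiniteMeasure (symMeasure μ) := by
  constructor
  rw [symMeasure]
  have h1 : (Measure.map (fun z : UnitSphere N => -z) μ) Set.univ ≤ μ Set.univ := by
    rw [Measure.map_apply (continuous_sphere_neg.measurable) MeasurableSet.univ]
    exact measure_mono (Set.subset_univ _)
  calc ((2 : ENNReal)⁻¹ • (μ + Measure.map (fun z : UnitSphere N => -z) μ)) Set.univ
      = 2⁻¹ * (μ Set.univ + (Measure.map (fun z : UnitSphere N => -z) μ) Set.univ) := by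
        simp [Measure.add_apply, mul_add]
    _ < ⊤ := by
        have := measure_lt_top μ Set.univ
        refine ENNReal.mul_lt_top (by simp) ?_
        exact ENNReal.add_lt_top.mpr ⟨this, lt_of_le_of_lt h1 this⟩

lemma integral_symMeasure (μ : Measure (UnitSphere N)) [IsFiniteMeasure μ]
    {f : UnitSphere N → ℝ} (hf : Continuous f) :
    ∫ z, f z ∂(symMeasure μ) = 2⁻¹ * (∫ z, f z ∂μ + ∫ z, f (-z) ∂μ) := by
  have hneg : Continuous fun z : UnitSphere N => f (-z) := hf.comp continuous_sphere_neg
  have h2 : Integrable f (Measure.map (fun z : UnitSphere N => -z) μ) := by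
    rw [MeasureTheory.integrable_map_measure hf.aestronglyMeasurable
      continuous_sphere_neg.measurable.aemeasurable]
    exact hneg.integrable_sphere μ
  rw [symMeasure, MeasureTheory.integral_smul_measure,
    MeasureTheory.integral_add_measure (hf.integrable_sphere μ) h2,
    MeasureTheory.integral_map continuous_sphere_neg.measurable.aemeasurable
      hf.aestronglyMeasurable]
  simp [ENNReal.toReal_inv, smul_eq_mul]

lemma integral_symMeasure_even (μ : Measure (UnitSphere N)) [IsFiniteMeasure μ]
    {f : UnitSphere N → ℝ} (hf : Continuous f) (he : ∀ z, f (-z) = f z) :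
    ∫ z, f z ∂(symMeasure μ) = ∫ z, f z ∂μ := by
  rw [integral_symMeasure μ hf]
  simp only [he]
  ring

/-- disjointify a finite family of measurable sets keeping the union. -/
lemma exists_disjointify {α : Type*} [MeasurableSpace α] {m : ℕ} (W : Fin m → Set α)
    (hW : ∀ k, MeasurableSet (W k)) :
    ∃ U : Fin m → Set α, (∀ k, MeasurableSet (U k)) ∧
      (Pairwise fun i j => Disjoint (U i) (U j)) ∧ (∀ k, U k ⊆ W k) ∧
      (⋃ k, U k) = ⋃ k, W k := by
  set W' : ℕ → Set α := fun n => if h : n < m then W ⟨n, h⟩ else ∅ with hW'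
  have hW'meas : ∀ n, MeasurableSet (W' n) := by
    intro n; by_cases h : n < m <;> simp [hW', h, hW]
  refine ⟨fun k => disjointed W' k, fun k => MeasurableSet.disjointed hW'meas _, ?_, ?_, ?_⟩
  · intro i j hij
    exact disjoint_disjointed W' (fun h => hij (Fin.val_injective h))
  · intro k
    have : W' (k : ℕ) = W k := by simp [hW', k.isLt]
    exact this ▸ disjointed_subset W' (k : ℕ)
  · apply subset_antisymm
    · exact Set.iUnion_subset fun k => subset_trans (disjointed_subset W' _)
        (by rw [show W' (k:ℕ) = W k by simp [hW', k.isLt]]; exact Set.subset_iUnion W k)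
    · intro x hx
      obtain ⟨k, hk⟩ := Set.mem_iUnion.mp hx
      have hx' : x ∈ ⋃ n, disjointed W' n := by
        rw [iUnion_disjointed]
        exact Set.mem_iUnion.mpr ⟨k, by simp [hW', k.isLt, hk]⟩
      obtain ⟨n, hn⟩ := Set.mem_iUnion.mp hx'
      have hnm : n < m := by
        by_contra h
        have hsub : disjointed W' n ⊆ W' n := disjointed_subset W' n
        have : x ∈ W' n := hsub hn
        simp [hW', h] at this
      exact Set.mem_iUnion.mpr ⟨⟨n, hnm⟩, hn⟩

/-- integral over a finite measurable partition. -/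
lemma integral_partition {α : Type*} [MeasurableSpace α] {m : ℕ} (ρ : Measure α)
    {U : Fin m → Set α} (hU : ∀ k, MeasurableSet (U k))
    (hdisj : Pairwise fun i j => Disjoint (U i) (U j)) (hun : (⋃ k, U k) = Set.univ)
    {f : α → ℝ} (hf : Integrable f ρ) :
    ∫ z, f z ∂ρ = ∑ k, ∫ z in U k, f z ∂ρ := by
  have := MeasureTheory.integral_iUnion hU hdisj (hf.integrableOn (s := ⋃ k, U k))
  rw [hun] at this
  rw [show ∫ z, f z ∂ρ = ∫ x in Set.univ, f x ∂ρ by rw [MeasureTheory.setIntegral_univ],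
    this, tsum_fintype]

end measures

/-- The key intermediate statement: domination of support-function integrals over *all*
nonempty compact convex bodies. -/
def Hstmt (lam rho : Measure (UnitSphere N)) : Prop :=
  ∀ K : Set (EuclideanSpace ℝ (Fin N)), K.Nonempty → IsCompact K → Convex ℝ K →
    ∫ z, suppFn K (z : EuclideanSpace ℝ (Fin N)) ∂rho
      ≤ ∫ z, suppFn K (z : EuclideanSpace ℝ (Fin N)) ∂lam

lemma sphere_nonempty_of (hN : 1 ≤ N) : Nonempty (UnitSphere N) := by
  refine ⟨⟨EuclideanSpace.single (⟨0, hN⟩ : Fin N) (1:ℝ), ?_⟩⟩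
  simp [EuclideanSpace.norm_single]

theorem hstmt_of_linMaj (hN : 1 ≤ N) (lam rho : Measure (UnitSphere N))
    [IsFiniteMeasure lam] [IsFiniteMeasure rho] (h : LinMaj N lam rho) : Hstmt lam rho := by
  intro K hne hK _
  have hf : Continuous fun z : UnitSphere N => suppFn K (z : EuclideanSpace ℝ (Fin N)) :=
    (continuous_suppFn hne hK).comp continuous_subtype_val
  obtain ⟨R₀, hR₀⟩ := hK.isBounded.exists_norm_le
  set R := max R₀ 0 with hR
  have hRnn : (0:ℝ) ≤ R := le_max_right _ _
  have hRb : ∀ x ∈ K, ‖x‖ ≤ R := fun x hx => le_trans (hR₀ x hx) (le_max_left _ _)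
  set P := (rho Set.univ).toReal with hP
  have hPnn : 0 ≤ P := ENNReal.toReal_nonneg
  apply le_of_forall_pos_le_add
  intro ε hε
  set D : ℝ := 4 * (R + 1) * (P + 1) with hD
  have hDpos : 0 < D := by positivity
  set δ := ε / D with hδ
  have hδpos : 0 < δ := div_pos hε hDpos
  haveI hSne : Nonempty (UnitSphere N) := sphere_nonempty_of hN
  obtain ⟨t, -, htfin, hcover⟩ :=
    finite_cover_balls_of_compact (isCompact_univ (X := UnitSphere N)) hδpos
  set tf := htfin.toFinset with htf
  set m := tf.card with hm
  set c : Fin m → UnitSphere N := fun k => (tf.equivFin.symm k : UnitSphere N) with hc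
  set W : Fin m → Set (UnitSphere N) := fun k => ball (c k) δ with hWdef
  have hWuniv : (⋃ k, W k) = Set.univ := by
    apply Set.eq_univ_of_univ_subset
    intro z _
    have hz := hcover (Set.mem_univ z)
    rw [Set.mem_iUnion₂] at hz
    obtain ⟨x, hxt, hzx⟩ := hz
    refine Set.mem_iUnion.mpr ⟨tf.equivFin ⟨x, htfin.mem_toFinset.mpr hxt⟩, ?_⟩
    have hcx : c (tf.equivFin ⟨x, htfin.mem_toFinset.mpr hxt⟩) = x := by
      simp [hc]
    rw [hWdef]
    simpa [hcx] using hzx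
  obtain ⟨U, hUm, hUd, hUsub, hUun⟩ := exists_disjointify W (fun k => measurableSet_ball)
  rw [hWuniv] at hUun
  obtain ⟨μk, hμfin, hsum, hmom⟩ := h m U hUm hUd hUun
  haveI := hμfin
  have key : ∀ k, ∫ z in U k, suppFn K (z : EuclideanSpace ℝ (Fin N)) ∂rho
      ≤ (∫ z, suppFn K (z : EuclideanSpace ℝ (Fin N)) ∂(μk k))
        + 4 * R * δ * (rho (U k)).toReal := by
    intro k
    by_cases hUne : (U k).Nonempty
    · obtain ⟨zk, hzk⟩ := hUne
      obtain ⟨xk, hxk, hxke⟩ := exists_suppFn_eq hne hK (zk : EuclideanSpace ℝ (Fin N))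
      have hg : Continuous fun z : UnitSphere N => (inner ℝ xk (z : EuclideanSpace ℝ (Fin N)) : ℝ) :=
        continuous_const.inner continuous_subtype_val
      have hpt : ∀ z ∈ U k, suppFn K (z : EuclideanSpace ℝ (Fin N))
          ≤ (inner ℝ xk (z : EuclideanSpace ℝ (Fin N)) : ℝ) + 4 * R * δ := by
        intro z hz
        have hzW : z ∈ ball (c k) δ := hUsub k hz
        have hzkW : zk ∈ ball (c k) δ := hUsub k hzk
        have hd : dist z zk < 2 * δ := by
          have := dist_triangle z (c k) zk
          rw [mem_ball] at hzW hzkW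
          rw [dist_comm zk (c k)] at hzkW
          linarith
        have hnorm : ‖(z : EuclideanSpace ℝ (Fin N)) - (zk : EuclideanSpace ℝ (Fin N))‖ < 2 * δ := by
          rw [← dist_eq_norm, ← Subtype.dist_eq]
          exact hd
        have l1 : suppFn K (z : EuclideanSpace ℝ (Fin N))
            - suppFn K (zk : EuclideanSpace ℝ (Fin N))
            ≤ R * ‖(z : EuclideanSpace ℝ (Fin N)) - (zk : EuclideanSpace ℝ (Fin N))‖ :=
          suppFn_lipschitz hne hK hRb _ _
        have l2 : (inner ℝ xk ((zk : EuclideanSpace ℝ (Fin N)) - (z : EuclideanSpace ℝ (Fin N))) : ℝ)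
            ≤ R * ‖(zk : EuclideanSpace ℝ (Fin N)) - (z : EuclideanSpace ℝ (Fin N))‖ := by
          calc (inner ℝ xk ((zk : EuclideanSpace ℝ (Fin N)) - (z : EuclideanSpace ℝ (Fin N))) : ℝ)
              ≤ ‖xk‖ * ‖(zk : EuclideanSpace ℝ (Fin N)) - (z : EuclideanSpace ℝ (Fin N))‖ :=
                real_inner_le_norm _ _
            _ ≤ R * ‖(zk : EuclideanSpace ℝ (Fin N)) - (z : EuclideanSpace ℝ (Fin N))‖ :=
                mul_le_mul_of_nonneg_right (hRb xk hxk) (norm_nonneg _)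
        have hsplit : (inner ℝ xk (zk : EuclideanSpace ℝ (Fin N)) : ℝ)
            = (inner ℝ xk (z : EuclideanSpace ℝ (Fin N)) : ℝ)
              + (inner ℝ xk ((zk : EuclideanSpace ℝ (Fin N)) - (z : EuclideanSpace ℝ (Fin N))) : ℝ) := by
           rw [inner_sub_right]; ring
        have hrev : ‖(zk : EuclideanSpace ℝ (Fin N)) - (z : EuclideanSpace ℝ (Fin N))‖
            = ‖(z : EuclideanSpace ℝ (Fin N)) - (zk : EuclideanSpace ℝ (Fin N))‖ :=
          norm_sub_rev _ _
        rw [hrev] at l2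
        nlinarith [hnorm, hRnn]
      have int1 : IntegrableOn (fun z : UnitSphere N => suppFn K (z : EuclideanSpace ℝ (Fin N)))
          (U k) rho := (hf.integrable_sphere rho).integrableOn
      have int2 : IntegrableOn
          (fun z : UnitSphere N => (inner ℝ xk (z : EuclideanSpace ℝ (Fin N)) : ℝ)) (U k) rho :=
        (hg.integrable_sphere rho).integrableOn
      have hmomk : ∫ z, (inner ℝ xk (z : EuclideanSpace ℝ (Fin N)) : ℝ) ∂(μk k)
          = ∫ z in U k, (inner ℝ xk (z : EuclideanSpace ℝ (Fin N)) : ℝ) ∂rho := by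
        simpa using hmom k (innerSL ℝ xk)
      calc ∫ z in U k, suppFn K (z : EuclideanSpace ℝ (Fin N)) ∂rho
          ≤ ∫ z in U k, ((inner ℝ xk (z : EuclideanSpace ℝ (Fin N)) : ℝ) + 4 * R * δ) ∂rho := by
            refine MeasureTheory.setIntegral_mono_on int1 ?_ (hUm k) hpt
            exact int2.add (MeasureTheory.integrableOn_const (measure_ne_top _ _))
        _ = (∫ z in U k, (inner ℝ xk (z : EuclideanSpace ℝ (Fin N)) : ℝ) ∂rho)
            + 4 * R * δ * (rho (U k)).toReal := by
            rw [MeasureTheory.integral_add int2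
              (MeasureTheory.integrableOn_const (measure_ne_top _ _)),
              MeasureTheory.setIntegral_const, smul_eq_mul, mul_comm]
            rfl
        _ = (∫ z, (inner ℝ xk (z : EuclideanSpace ℝ (Fin N)) : ℝ) ∂(μk k))
            + 4 * R * δ * (rho (U k)).toReal := by rw [hmomk]
        _ ≤ (∫ z, suppFn K (z : EuclideanSpace ℝ (Fin N)) ∂(μk k))
            + 4 * R * δ * (rho (U k)).toReal := by
            refine add_le_add_left ?_ _
            exact MeasureTheory.integral_mono (hg.integrable_sphere _) (hf.integrable_sphere _)
              (fun z => inner_le_suppFn hK hxk)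
    · rw [Set.not_nonempty_iff_eq_empty] at hUne
      obtain ⟨x0, hx0⟩ := hne
      have hg : Continuous fun z : UnitSphere N => (inner ℝ x0 (z : EuclideanSpace ℝ (Fin N)) : ℝ) :=
        continuous_const.inner continuous_subtype_val
      have h0' : ∫ z, (inner ℝ x0 (z : EuclideanSpace ℝ (Fin N)) : ℝ) ∂(μk k) = 0 := by
        have := hmom k (innerSL ℝ x0)
        simp only [hUne] at this
        simpa using this
      have hle : (0:ℝ) ≤ ∫ z, suppFn K (z : EuclideanSpace ℝ (Fin N)) ∂(μk k) := by
        rw [← h0']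
        exact MeasureTheory.integral_mono (hg.integrable_sphere _) (hf.integrable_sphere _)
          (fun z => inner_le_suppFn hK hx0)
      have hz : ∫ z in U k, suppFn K (z : EuclideanSpace ℝ (Fin N)) ∂rho = 0 := by
        rw [hUne]; simp
      rw [hz]
      positivity
  have hsumU : ∑ k, (rho (U k)).toReal = P := by
    have h1 : rho Set.univ = ∑ k, rho (U k) := by
      rw [← hUun, measure_iUnion hUd hUm, tsum_fintype]
    rw [hP, h1, ENNReal.toReal_sum (fun a _ => measure_ne_top rho _)]
  have hδD : 4 * R * δ * P ≤ ε := by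
    have hδD' : δ * D = ε := div_mul_cancel₀ ε hDpos.ne'
    nlinarith [hδpos.le, hRnn, hPnn, mul_nonneg hδpos.le (mul_nonneg hRnn hPnn)]
  calc ∫ z, suppFn K (z : EuclideanSpace ℝ (Fin N)) ∂rho
      = ∑ k, ∫ z in U k, suppFn K (z : EuclideanSpace ℝ (Fin N)) ∂rho :=
        integral_partition rho hUm hUd hUun (hf.integrable_sphere rho)
    _ ≤ ∑ k, ((∫ z, suppFn K (z : EuclideanSpace ℝ (Fin N)) ∂(μk k))
          + 4 * R * δ * (rho (U k)).toReal) := Finset.sum_le_sum fun k _ => key k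
    _ = (∑ k, ∫ z, suppFn K (z : EuclideanSpace ℝ (Fin N)) ∂(μk k))
          + 4 * R * δ * ∑ k, (rho (U k)).toReal := by
        rw [Finset.sum_add_distrib, Finset.mul_sum]
    _ = (∫ z, suppFn K (z : EuclideanSpace ℝ (Fin N)) ∂lam) + 4 * R * δ * P := by
        rw [hsum, MeasureTheory.integral_finset_sum_measure
          (fun k _ => hf.integrable_sphere (μk k)), hsumU]
    _ ≤ (∫ z, suppFn K (z : EuclideanSpace ℝ (Fin N)) ∂lam) + ε := by linarith

set_option maxHeartbeats 1000000 in
lemma coeFn_lp_sum {α : Type*} [MeasurableSpace α] (μ : Measure α) {ι : Type*} (s : Finset ι)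
    (f : ι → Lp ℝ 2 μ) :
    (((∑ i ∈ s, f i : Lp ℝ 2 μ)) : α → ℝ) =ᵐ[μ] fun z => ∑ i ∈ s, (f i : α → ℝ) z := by
  classical
  induction s using Finset.induction_on with
  | empty =>
      simp only [Finset.sum_empty]
      exact MeasureTheory.Lp.coeFn_zero ℝ 2 μ
  | @insert a s hnot ih =>
      rw [Finset.sum_insert hnot]
      filter_upwards [MeasureTheory.Lp.coeFn_add (f a) (∑ i ∈ s, f i), ih] with z h1 h2
      rw [h1]
      simp only [Pi.add_apply, h2]
      rw [Finset.sum_insert hnot]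

set_option maxHeartbeats 2000000 in
theorem linMaj_of_hstmt (hN : 1 ≤ N) (lam rho : Measure (UnitSphere N))
    [IsFiniteMeasure lam] [IsFiniteMeasure rho] (h : Hstmt lam rho) : LinMaj N lam rho := by
  classical
  intro m U hUm hUd hUun
  haveI hSne : Nonempty (UnitSphere N) := sphere_nonempty_of hN
  rcases Nat.eq_zero_or_pos m with hm0 | hmpos
  · exfalso; subst hm0
    have : (Classical.arbitrary (UnitSphere N)) ∈ ⋃ k : Fin 0, U k :=
      hUun ▸ Set.mem_univ _
    simpa using this
  haveI : Nonempty (Fin m) := Fin.pos_iff_nonempty.mp hmpos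
  -- coordinate functions in L²(lam)
  have hnormz : ∀ z : UnitSphere N, ‖(z : EuclideanSpace ℝ (Fin N))‖ = 1 := by
    intro z
    have := z.2
    rwa [mem_sphere_iff_norm, sub_zero] at this
  have hcontx : ∀ x : EuclideanSpace ℝ (Fin N),
      Continuous fun z : UnitSphere N => (inner ℝ x (z : EuclideanSpace ℝ (Fin N)) : ℝ) :=
    fun x => continuous_const.inner continuous_subtype_val
  have memx : ∀ x : EuclideanSpace ℝ (Fin N),
      MemLp (fun z : UnitSphere N => (inner ℝ x (z : EuclideanSpace ℝ (Fin N)) : ℝ)) 2 lam := by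
    intro x
    refine MemLp.of_bound (hcontx x).aestronglyMeasurable ‖x‖
      (Filter.Eventually.of_forall fun z => ?_)
    calc ‖(inner ℝ x (z : EuclideanSpace ℝ (Fin N)) : ℝ)‖
        ≤ ‖x‖ * ‖(z : EuclideanSpace ℝ (Fin N))‖ := by
          rw [Real.norm_eq_abs]; exact abs_real_inner_le_norm _ _
      _ = ‖x‖ := by rw [hnormz z, mul_one]
  set g : EuclideanSpace ℝ (Fin N) → Lp ℝ 2 lam := fun x => (memx x).toLp _ with hgdef
  have hgcoe : ∀ x, (g x : UnitSphere N → ℝ)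
      =ᵐ[lam] fun z => (inner ℝ x (z : EuclideanSpace ℝ (Fin N)) : ℝ) :=
    fun x => (memx x).coeFn_toLp
  -- the compact convex set of constrained dual tuples
  set r : ℝ := ((lam Set.univ).toReal) ^ (2⁻¹ : ℝ) with hrdef
  set Ball : Set (WeakDual ℝ (Lp ℝ 2 lam)) :=
    WeakDual.toStrongDual ⁻¹' Metric.closedBall 0 r with hBall
  have hBallC : IsCompact Ball := WeakDual.isCompact_closedBall (𝕜 := ℝ) (0 : StrongDual ℝ (Lp ℝ 2 lam)) r
  set GA := {T : Fin m → WeakDual ℝ (Lp ℝ 2 lam) | ∀ k, T k ∈ Ball} with hGA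
  set GB := {T : Fin m → WeakDual ℝ (Lp ℝ 2 lam) |
    ∀ k (f : Lp ℝ 2 lam), (0 : UnitSphere N → ℝ) ≤ᵐ[lam] ⇑f → 0 ≤ T k f} with hGB
  set GC := {T : Fin m → WeakDual ℝ (Lp ℝ 2 lam) |
    ∀ f : Lp ℝ 2 lam, ∑ k, T k f = ∫ z, ⇑f z ∂lam} with hGC
  set Gset := GA ∩ GB ∩ GC with hGset
  have hGcl : IsClosed Gset := by
    have hA : IsClosed GA := by
      rw [hGA, Set.setOf_forall]
      exact isClosed_iInter fun k => hBallC.isClosed.preimage (continuous_apply k)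
    have hB : IsClosed GB := by
      rw [hGB, Set.setOf_forall]
      refine isClosed_iInter fun k => ?_
      rw [Set.setOf_forall]
      refine isClosed_iInter fun f => ?_
      by_cases hf : (0 : UnitSphere N → ℝ) ≤ᵐ[lam] ⇑f
      · simp only [hf, forall_true_left]
        exact isClosed_le continuous_const
          ((WeakDual.eval_continuous f).comp (continuous_apply k))
      · simp [hf]
    have hC : IsClosed GC := by
      rw [hGC, Set.setOf_forall]
      refine isClosed_iInter fun f => ?_
      exact isClosed_eq (continuous_finset_sum _ fun k _ =>
        (WeakDual.eval_continuous f).comp (continuous_apply k)) continuous_const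
    exact (hA.inter hB).inter hC
  have hGcpt : IsCompact Gset := by
    refine (isCompact_univ_pi (fun _ : Fin m => hBallC)).of_isClosed_subset hGcl ?_
    intro T hT
    rw [Set.mem_univ_pi]
    exact fun k => hT.1.1 k
  have hGcvx : Convex ℝ Gset := by
    have hBallcvx : Convex ℝ Ball :=
      (convex_closedBall (0 : StrongDual ℝ (Lp ℝ 2 lam)) r).linear_preimage
        (WeakDual.toStrongDual (𝕜 := ℝ) (E := Lp ℝ 2 lam)).toLinearMap
    intro T hT T' hT' a c ha hc hac
    refine ⟨⟨fun k => ?_, fun k f hf => ?_⟩, fun f => ?_⟩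
    · exact hBallcvx (hT.1.1 k) (hT'.1.1 k) ha hc hac
    · have h1 : 0 ≤ T k f := hT.1.2 k f hf
      have h2 : 0 ≤ T' k f := hT'.1.2 k f hf
      have : (a • T + c • T') k f = a * T k f + c * T' k f := rfl
      rw [this]
      positivity
    · have : ∀ k, (a • T + c • T') k f = a * T k f + c * T' k f := fun k => rfl
      simp only [this]
      rw [Finset.sum_add_distrib, ← Finset.mul_sum, ← Finset.mul_sum, hT.2 f, hT'.2 f,
        ← add_mul, hac, one_mul]
  -- evaluation map and target
  set β : (Fin m → WeakDual ℝ (Lp ℝ 2 lam)) → (Fin m × Fin N → ℝ) :=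
    fun T p => T p.1 (g (EuclideanSpace.single p.2 1)) with hβdef
  have hβcont : Continuous β :=
    continuous_pi fun p => (WeakDual.eval_continuous _).comp (continuous_apply p.1)
  have hβlin : IsLinearMap ℝ β := by
    constructor
    · intro T T'; funext p; rfl
    · intro a T; funext p; rfl
  set Cset := β '' Gset with hCset
  have hCcpt : IsCompact Cset := hGcpt.image hβcont
  have hCcvx : Convex ℝ Cset := hGcvx.is_linear_image hβlin
  set b : Fin m × Fin N → ℝ := fun p =>
    ∫ z in U p.1, (inner ℝ (EuclideanSpace.single p.2 (1:ℝ))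
      (z : EuclideanSpace ℝ (Fin N)) : ℝ) ∂rho with hbdef
  -- b belongs to Cset, by separation and the hypothesis h
  have hbC : b ∈ Cset := by
    by_contra hb
    obtain ⟨F, u, hFlt, hub⟩ := geometric_hahn_banach_closed_point hCcvx hCcpt.isClosed hb
    set cc : Fin m × Fin N → ℝ := fun p => F (fun q => if p = q then 1 else 0) with hccdef
    have hFeval : ∀ y : Fin m × Fin N → ℝ, F y = ∑ p, y p * cc p := by
      intro y
      conv_lhs => rw [pi_eq_sum_univ y]
      rw [map_sum]
      refine Finset.sum_congr rfl fun p _ => ?_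
      rw [_root_.map_smul, smul_eq_mul]
    set x : Fin m → EuclideanSpace ℝ (Fin N) := fun k =>
      ∑ i, cc (k, i) • EuclideanSpace.single i (1:ℝ) with hxdef
    have hinnerx : ∀ (k) (z : EuclideanSpace ℝ (Fin N)),
        (inner ℝ (x k) z : ℝ) = ∑ i, cc (k, i) *
          (inner ℝ (EuclideanSpace.single i (1:ℝ)) z : ℝ) := by
      intro k z
      rw [hxdef]
      rw [sum_inner]
      exact Finset.sum_congr rfl fun i _ => real_inner_smul_left _ _ _
    -- the polytope and its support function
    set P := convexHull ℝ (Set.range x) with hPdef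
    have hPne : P.Nonempty :=
      ⟨x (Classical.arbitrary _), subset_convexHull ℝ _ (Set.mem_range_self _)⟩
    have hPcpt : IsCompact P := (Set.finite_range x).isCompact_convexHull ℝ
    have hPcvx : Convex ℝ P := convex_convexHull ℝ _
    have hMcont : Continuous fun z : UnitSphere N =>
        suppFn P (z : EuclideanSpace ℝ (Fin N)) :=
      (continuous_suppFn hPne hPcpt).comp continuous_subtype_val
    -- argmax partition
    set B : Fin m → Set (UnitSphere N) := fun k =>
      {z : UnitSphere N | suppFn P (z : EuclideanSpace ℝ (Fin N))
        ≤ (inner ℝ (x k) (z : EuclideanSpace ℝ (Fin N)) : ℝ)} with hBdef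
    have hBm : ∀ k, MeasurableSet (B k) := fun k =>
      (isClosed_le hMcont (hcontx (x k))).measurableSet
    have hBuniv : (⋃ k, B k) = Set.univ := by
      apply Set.eq_univ_of_univ_subset
      intro z _
      have : suppFn P (z : EuclideanSpace ℝ (Fin N))
          = Finset.univ.sup' Finset.univ_nonempty
            (fun k => (inner ℝ (x k) (z : EuclideanSpace ℝ (Fin N)) : ℝ)) :=
        suppFn_convexHull_range x _
      obtain ⟨k, -, hk⟩ := Finset.exists_mem_eq_sup' Finset.univ_nonempty
        (fun k => (inner ℝ (x k) (z : EuclideanSpace ℝ (Fin N)) : ℝ))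
      exact Set.mem_iUnion.mpr ⟨k, by rw [hBdef]; simp only [Set.mem_setOf_eq, this, hk]; exact le_refl _⟩
    obtain ⟨A, hAm, hAd, hAsub, hAun⟩ := exists_disjointify B hBm
    rw [hBuniv] at hAun
    -- indicator functionals
    set T0 : Fin m → WeakDual ℝ (Lp ℝ 2 lam) := fun k =>
      StrongDual.toWeakDual (InnerProductSpace.toDual ℝ (Lp ℝ 2 lam)
        (indicatorConstLp 2 (hAm k) (measure_ne_top lam _) (1:ℝ))) with hT0def
    have hT0app : ∀ (k) (f : Lp ℝ 2 lam), T0 k f = ∫ z in A k, ⇑f z ∂lam := by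
      intro k f
      have h0 : T0 k f = (InnerProductSpace.toDual ℝ (Lp ℝ 2 lam)
          (indicatorConstLp 2 (hAm k) (measure_ne_top lam _) (1:ℝ))) f := rfl
      rw [h0, InnerProductSpace.toDual_apply_apply,
        MeasureTheory.L2.inner_indicatorConstLp_eq_setIntegral_inner]
      simp [RCLike.inner_apply]
    have hT0G : T0 ∈ Gset := by
      refine ⟨⟨fun k => ?_, fun k f hf => ?_⟩, fun f => ?_⟩
      · rw [hBall]
        simp only [Set.mem_preimage, Metric.mem_closedBall, dist_zero_right]
        have h1 : ‖WeakDual.toStrongDual (T0 k)‖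
            = ‖indicatorConstLp 2 (hAm k) (measure_ne_top lam _) (1:ℝ)‖ := by
          have e0 : WeakDual.toStrongDual (T0 k) = InnerProductSpace.toDual ℝ (Lp ℝ 2 lam)
              (indicatorConstLp 2 (hAm k) (measure_ne_top lam _) (1:ℝ)) := rfl
          rw [e0]
          exact (InnerProductSpace.toDual ℝ (Lp ℝ 2 lam)).norm_map _
        rw [h1, MeasureTheory.norm_indicatorConstLp (by norm_num) (by norm_num)]
        rw [hrdef]
        have h2 : (lam (A k)).toReal ≤ (lam Set.univ).toReal :=
          ENNReal.toReal_mono (measure_ne_top lam _) (measure_mono (Set.subset_univ _))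
        have h3 : (1 / (2:ℝ≥0∞).toReal) = (2⁻¹ : ℝ) := by norm_num
        rw [h3]
        rw [norm_one, one_mul]
        exact Real.rpow_le_rpow ENNReal.toReal_nonneg h2 (by norm_num)
      · rw [hT0app]
        exact MeasureTheory.integral_nonneg_of_ae (ae_restrict_of_ae hf)
      · simp only [hT0app]
        exact (integral_partition lam hAm hAd hAun
          ((MeasureTheory.Lp.memLp f).integrable (by norm_num))).symm
    -- compute F ∘ β
    set gx : Fin m → Lp ℝ 2 lam := fun k =>
      ∑ i, cc (k, i) • g (EuclideanSpace.single i (1:ℝ)) with hgxdef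
    have hgxcoe : ∀ k, (gx k : UnitSphere N → ℝ)
        =ᵐ[lam] fun z => (inner ℝ (x k) (z : EuclideanSpace ℝ (Fin N)) : ℝ) := by
      intro k
      have h1 := coeFn_lp_sum lam Finset.univ
        (fun i => cc (k, i) • g (EuclideanSpace.single i (1:ℝ)))
      have h2 : ∀ i : Fin N, (⇑(cc (k, i) • g (EuclideanSpace.single i (1:ℝ))) : UnitSphere N → ℝ)
          =ᵐ[lam] fun z => cc (k, i) *
            (inner ℝ (EuclideanSpace.single i (1:ℝ)) (z : EuclideanSpace ℝ (Fin N)) : ℝ) := by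
        intro i
        filter_upwards [MeasureTheory.Lp.coeFn_smul (cc (k, i))
          (g (EuclideanSpace.single i (1:ℝ))), hgcoe (EuclideanSpace.single i (1:ℝ))] with z hz1 hz2
        rw [hz1]
        simp only [Pi.smul_apply, smul_eq_mul, hz2]
      rw [hgxdef]
      refine h1.trans ?_
      have h3 := MeasureTheory.ae_all_iff.mpr h2
      filter_upwards [h3] with z hz
      rw [hinnerx k]
      exact Finset.sum_congr rfl fun i _ => hz i
    have hFβ : ∀ T : Fin m → WeakDual ℝ (Lp ℝ 2 lam), F (β T) = ∑ k, T k (gx k) := by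
      intro T
      rw [hFeval]
      rw [Fintype.sum_prod_type]
      refine Finset.sum_congr rfl fun k _ => ?_
      rw [hgxdef, map_sum]
      refine Finset.sum_congr rfl fun i _ => ?_
      rw [_root_.map_smul, smul_eq_mul, hβdef, mul_comm]
    -- F b as a sum of set integrals
    have hFb : F b = ∑ k, ∫ z in U k,
        (inner ℝ (x k) (z : EuclideanSpace ℝ (Fin N)) : ℝ) ∂rho := by
      rw [hFeval, Fintype.sum_prod_type]
      refine Finset.sum_congr rfl fun k _ => ?_
      have h1 : ∫ z in U k, (inner ℝ (x k) (z : EuclideanSpace ℝ (Fin N)) : ℝ) ∂rho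
          = ∫ z in U k, (∑ i, cc (k, i) * (inner ℝ (EuclideanSpace.single i (1:ℝ))
              (z : EuclideanSpace ℝ (Fin N)) : ℝ)) ∂rho := by
        refine MeasureTheory.integral_congr_ae (Filter.Eventually.of_forall fun z => ?_)
        exact hinnerx k _
      rw [h1, MeasureTheory.integral_finset_sum _
        (fun i _ => (((hcontx _).integrable_sphere rho).integrableOn.const_mul _))]
      refine Finset.sum_congr rfl fun i _ => ?_
      rw [MeasureTheory.integral_const_mul]
      simp only [hbdef]
      ring
    -- chain of inequalities leading to a contradiction
    have step1 : F b ≤ ∫ z, suppFn P (z : EuclideanSpace ℝ (Fin N)) ∂rho := by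
      rw [hFb, integral_partition rho hUm hUd hUun (hMcont.integrable_sphere rho)]
      refine Finset.sum_le_sum fun k _ => ?_
      refine MeasureTheory.setIntegral_mono_on
        (((hcontx (x k)).integrable_sphere rho).integrableOn)
        ((hMcont.integrable_sphere rho).integrableOn) (hUm k) ?_
      intro z _
      exact inner_le_suppFn hPcpt (subset_convexHull ℝ _ (Set.mem_range_self k))
    have step2 : ∫ z, suppFn P (z : EuclideanSpace ℝ (Fin N)) ∂rho
        ≤ ∫ z, suppFn P (z : EuclideanSpace ℝ (Fin N)) ∂lam := h P hPne hPcpt hPcvx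
    have step3 : ∫ z, suppFn P (z : EuclideanSpace ℝ (Fin N)) ∂lam = F (β T0) := by
      rw [hFβ T0, integral_partition lam hAm hAd hAun (hMcont.integrable_sphere lam)]
      refine Finset.sum_congr rfl fun k _ => ?_
      rw [hT0app]
      have e1 : ∫ z in A k, suppFn P (z : EuclideanSpace ℝ (Fin N)) ∂lam
          = ∫ z in A k, (inner ℝ (x k) (z : EuclideanSpace ℝ (Fin N)) : ℝ) ∂lam := by
        refine MeasureTheory.setIntegral_congr_fun (hAm k) fun z hz => ?_
        have hzB : z ∈ B k := hAsub k hz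
        exact le_antisymm hzB
          (inner_le_suppFn hPcpt (subset_convexHull ℝ _ (Set.mem_range_self k)))
      rw [e1]
      refine MeasureTheory.integral_congr_ae ?_
      exact ae_restrict_of_ae (hgxcoe k).symm
    have hlt : F (β T0) < u := hFlt _ (Set.mem_image_of_mem β hT0G)
    linarith
  -- extract the densities
  obtain ⟨T, hTG, hTb⟩ := hbC
  set fk : Fin m → Lp ℝ 2 lam := fun k =>
    (InnerProductSpace.toDual ℝ (Lp ℝ 2 lam)).symm (WeakDual.toStrongDual (T k)) with hfkdef
  have hTk : ∀ (k) (f : Lp ℝ 2 lam), (inner ℝ (fk k) f : ℝ) = T k f := by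
    intro k f
    rw [hfkdef]
    exact InnerProductSpace.toDual_symm_apply
  -- nonnegativity of the densities
  have hfk0 : ∀ k, (0 : UnitSphere N → ℝ) ≤ᵐ[lam] ⇑(fk k) := by
    intro k
    set u0 : UnitSphere N → ℝ := ⇑(fk k) with hu0
    set g0 : UnitSphere N → ℝ := fun z => max (-(u0 z)) 0 with hg0
    have hg0meas : AEStronglyMeasurable g0 lam :=
      (((MeasureTheory.Lp.stronglyMeasurable (fk k)).measurable.neg.max
        measurable_const).stronglyMeasurable).aestronglyMeasurable
    have hg0mem : MemLp g0 2 lam := by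
      refine MeasureTheory.MemLp.of_le (MeasureTheory.Lp.memLp (fk k)) hg0meas ?_
      refine Filter.Eventually.of_forall fun z => ?_
      simp only [hg0, Real.norm_eq_abs]
      rcases le_or_gt 0 (u0 z) with hz | hz
      · have hm : max (-(u0 z)) 0 = 0 := max_eq_right (by linarith)
        rw [hm]
        simp [abs_nonneg]
      · have hm : max (-(u0 z)) 0 = -(u0 z) := max_eq_left (by linarith)
        rw [hm, abs_neg]
    set gg := hg0mem.toLp g0 with hggdef
    have hggcoe : (⇑gg : UnitSphere N → ℝ) =ᵐ[lam] g0 := hg0mem.coeFn_toLp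
    have hggnn : (0 : UnitSphere N → ℝ) ≤ᵐ[lam] ⇑gg := by
      filter_upwards [hggcoe] with z hz
      rw [hz]
      simp only [hg0]
      exact le_max_right _ _
    have h2 : 0 ≤ T k gg := hTG.1.2 k gg hggnn
    rw [← hTk, MeasureTheory.L2.inner_def] at h2
    have h3 : (fun z => (inner ℝ (u0 z) ((⇑gg : UnitSphere N → ℝ) z) : ℝ))
        =ᵐ[lam] fun z => -(g0 z)^2 := by
      filter_upwards [hggcoe] with z hz
      rw [hz]
      simp only [RCLike.inner_apply, starRingEnd_apply, star_trivial, hg0]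
      rcases le_or_gt 0 (u0 z) with hzz | hzz
      · have hm : max (-(u0 z)) 0 = 0 := max_eq_right (by linarith)
        rw [hm]
        ring
      · have hm : max (-(u0 z)) 0 = -(u0 z) := max_eq_left (by linarith)
        rw [hm]
        ring
    have h4 : 0 ≤ ∫ z, -(g0 z)^2 ∂lam := by
      rw [← MeasureTheory.integral_congr_ae h3]
      exact h2
    have hint : Integrable (fun z => (g0 z)^2) lam := by
      have hI := MeasureTheory.L2.integrable_inner (𝕜 := ℝ) gg gg
      refine hI.congr ?_
      filter_upwards [hggcoe] with z hz
      simp only [RCLike.inner_apply, starRingEnd_apply, star_trivial, hz]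
      ring
    have h5 : ∫ z, (g0 z)^2 ∂lam = 0 := by
      have hn : 0 ≤ ∫ z, (g0 z)^2 ∂lam := MeasureTheory.integral_nonneg fun z => sq_nonneg _
      have hneg : ∫ z, -(g0 z)^2 ∂lam = -∫ z, (g0 z)^2 ∂lam := by
        exact MeasureTheory.integral_neg _
      linarith
    have h6 : (fun z => (g0 z)^2) =ᵐ[lam] 0 :=
      (MeasureTheory.integral_eq_zero_iff_of_nonneg (fun z => sq_nonneg _) hint).mp h5
    filter_upwards [h6] with z hz
    have hz0 : g0 z = 0 := by
      have : (g0 z)^2 = 0 := hz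
      exact pow_eq_zero_iff (by norm_num) |>.mp this
    simp only [hg0] at hz0
    simp only [Pi.zero_apply]
    by_contra hcon
    push_neg at hcon
    have hm : max (-(u0 z)) 0 = -(u0 z) := max_eq_left (by linarith)
    rw [hm] at hz0
    linarith
  -- the densities sum to one
  set oneL : Lp ℝ 2 lam :=
    indicatorConstLp 2 MeasurableSet.univ (measure_ne_top lam _) (1:ℝ) with honeL
  have hsumfk : (∑ k, fk k) = oneL := by
    apply ext_inner_left ℝ
    intro v
    have lhs : (inner ℝ v (∑ k, fk k) : ℝ) = ∫ z, (⇑v : UnitSphere N → ℝ) z ∂lam := by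
      rw [real_inner_comm, sum_inner]
      simp only [hTk]
      exact hTG.2 v
    have rhs : (inner ℝ v oneL : ℝ) = ∫ z, (⇑v : UnitSphere N → ℝ) z ∂lam := by
      rw [real_inner_comm, honeL, MeasureTheory.L2.inner_indicatorConstLp_eq_setIntegral_inner]
      simp only [RCLike.inner_apply, starRingEnd_apply, star_trivial, one_mul, mul_one]
      rw [MeasureTheory.setIntegral_univ]
    rw [lhs, rhs]
  have hone_ae : (⇑oneL : UnitSphere N → ℝ) =ᵐ[lam] fun _ => (1:ℝ) := by
    refine (MeasureTheory.indicatorConstLp_coeFn).trans ?_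
    rw [Set.indicator_univ]
  have hsum1 : (fun z => ∑ k, (⇑(fk k) : UnitSphere N → ℝ) z) =ᵐ[lam] fun _ => (1:ℝ) := by
    have hcs := coeFn_lp_sum lam Finset.univ fk
    rw [hsumfk] at hcs
    exact hcs.symm.trans hone_ae
  have hfkle : ∀ k, ∀ᵐ z ∂lam, (⇑(fk k) : UnitSphere N → ℝ) z ≤ 1 := by
    intro k
    have hall := MeasureTheory.ae_all_iff.mpr hfk0
    filter_upwards [hall, hsum1] with z hz1 hz2
    have hle : (⇑(fk k) : UnitSphere N → ℝ) z ≤ ∑ j, (⇑(fk j) : UnitSphere N → ℝ) z :=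
      Finset.single_le_sum (fun j _ => hz1 j) (Finset.mem_univ k)
    have hz2' : ∑ j, (⇑(fk j) : UnitSphere N → ℝ) z = 1 := hz2
    linarith
  -- build the measures
  set dens : Fin m → UnitSphere N → ℝ≥0 :=
    fun k z => Real.toNNReal ((⇑(fk k) : UnitSphere N → ℝ) z) with hdens
  have hdensmeas : ∀ k, Measurable (dens k) :=
    fun k => (MeasureTheory.Lp.stronglyMeasurable (fk k)).measurable.real_toNNReal
  set μk : Fin m → Measure (UnitSphere N) := fun k =>
    lam.withDensity (fun z => (dens k z : ℝ≥0∞)) with hμk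
  have hμkfin : ∀ k, IsFiniteMeasure (μk k) := by
    intro k
    constructor
    rw [hμk]
    simp only
    rw [MeasureTheory.withDensity_apply _ MeasurableSet.univ, Measure.restrict_univ]
    have hb1 : ∀ᵐ z ∂lam, ((dens k z : ℝ≥0∞)) ≤ 1 := by
      filter_upwards [hfkle k] with z hz
      have : ((dens k z : ℝ≥0∞)) = ENNReal.ofReal ((⇑(fk k) : UnitSphere N → ℝ) z) := rfl
      rw [this, show (1:ℝ≥0∞) = ENNReal.ofReal 1 by simp]
      exact ENNReal.ofReal_le_ofReal hz
    calc ∫⁻ z, (dens k z : ℝ≥0∞) ∂lam ≤ ∫⁻ _, 1 ∂lam := MeasureTheory.lintegral_mono_ae hb1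
      _ = lam Set.univ := MeasureTheory.lintegral_one
      _ < ⊤ := measure_lt_top _ _
  have hμksum : lam = ∑ k, μk k := by
    ext s hs
    rw [Measure.finset_sum_apply]
    have hrhs : ∑ k, (μk k) s = lam s := by
      have e1 : ∀ k : Fin m, (μk k) s = ∫⁻ z in s, (dens k z : ℝ≥0∞) ∂lam := by
        intro k
        rw [hμk]
        simp only
        rw [MeasureTheory.withDensity_apply _ hs]
      simp only [e1]
      rw [← MeasureTheory.lintegral_finset_sum _
        (fun k _ => (hdensmeas k).coe_nnreal_ennreal)]
      have hae : (fun z => ∑ k, ((dens k z : ℝ≥0∞))) =ᵐ[lam] fun _ => (1:ℝ≥0∞) := by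
        have hall := MeasureTheory.ae_all_iff.mpr hfk0
        filter_upwards [hall, hsum1] with z hz1 hz2
        have e2 : ∑ k, ((dens k z : ℝ≥0∞))
            = ENNReal.ofReal (∑ k, (⇑(fk k) : UnitSphere N → ℝ) z) := by
          rw [ENNReal.ofReal_sum_of_nonneg (fun i _ => hz1 i)]
          rfl
        have hz2' : ∑ k, (⇑(fk k) : UnitSphere N → ℝ) z = 1 := hz2
        rw [e2, hz2']
        simp
      rw [MeasureTheory.lintegral_congr_ae (ae_restrict_of_ae hae)]
      exact MeasureTheory.setLIntegral_one s
    rw [hrhs]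
  refine ⟨μk, hμkfin, hμksum, ?_⟩
  intro k ℓ
  haveI := hμkfin k
  set y : EuclideanSpace ℝ (Fin N) :=
    (InnerProductSpace.toDual ℝ (EuclideanSpace ℝ (Fin N))).symm ℓ with hy
  have hℓ : ∀ w, ℓ w = (inner ℝ y w : ℝ) := fun w =>
    (InnerProductSpace.toDual_symm_apply).symm
  have hyexp : ∀ w : EuclideanSpace ℝ (Fin N), (inner ℝ y w : ℝ)
      = ∑ i, y i * (inner ℝ (EuclideanSpace.single i (1:ℝ)) w : ℝ) := by
    intro w
    have hysum : y = ∑ i, y i • EuclideanSpace.single i (1:ℝ) := by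
      ext j
      rw [WithLp.ofLp_sum, Fintype.sum_apply]
      simp only [PiLp.smul_apply, EuclideanSpace.single_apply, smul_eq_mul]
      rw [Finset.sum_congr rfl (fun i _ => by rw [show (if j = i then (1:ℝ) else 0) = (if i = j then (1:ℝ) else 0) by simp [eq_comm]])]
      simp [Finset.sum_ite_eq]
    conv_lhs => rw [hysum]
    rw [sum_inner]
    exact Finset.sum_congr rfl fun i _ => by rw [real_inner_smul_left]
  have hstep1 : ∫ z, ℓ (z : EuclideanSpace ℝ (Fin N)) ∂(μk k)
      = ∫ z, ((dens k z : ℝ)) * (inner ℝ y (z : EuclideanSpace ℝ (Fin N)) : ℝ) ∂lam := by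
    rw [hμk]
    simp only
    rw [integral_withDensity_eq_integral_smul (hdensmeas k)]
    refine MeasureTheory.integral_congr_ae (Filter.Eventually.of_forall fun z => ?_)
    show (dens k z) • ℓ (z : EuclideanSpace ℝ (Fin N))
        = ((dens k z : ℝ)) * (inner ℝ y (z : EuclideanSpace ℝ (Fin N)) : ℝ)
    rw [hℓ, NNReal.smul_def, smul_eq_mul]
  have hstep2 : (fun z : UnitSphere N =>
        ((dens k z : ℝ)) * (inner ℝ y (z : EuclideanSpace ℝ (Fin N)) : ℝ))
      =ᵐ[lam] fun z => (⇑(fk k) : UnitSphere N → ℝ) z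
        * (inner ℝ y (z : EuclideanSpace ℝ (Fin N)) : ℝ) := by
    filter_upwards [hfk0 k] with z hz
    have hz' : (0:ℝ) ≤ (⇑(fk k) : UnitSphere N → ℝ) z := hz
    rw [hdens]
    simp only
    rw [Real.coe_toNNReal _ hz']
  have hintprod : ∀ i : Fin N, Integrable (fun z : UnitSphere N =>
      (⇑(fk k) : UnitSphere N → ℝ) z * (inner ℝ (EuclideanSpace.single i (1:ℝ))
        (z : EuclideanSpace ℝ (Fin N)) : ℝ)) lam := by
    intro i
    have hI := MeasureTheory.L2.integrable_inner (𝕜 := ℝ) (fk k)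
      (g (EuclideanSpace.single i (1:ℝ)))
    refine hI.congr ?_
    filter_upwards [hgcoe (EuclideanSpace.single i (1:ℝ))] with z hz
    simp only [RCLike.inner_apply, starRingEnd_apply, star_trivial, hz, mul_comm]
  have hkey : ∀ i : Fin N, ∫ z, (⇑(fk k) : UnitSphere N → ℝ) z
        * (inner ℝ (EuclideanSpace.single i (1:ℝ)) (z : EuclideanSpace ℝ (Fin N)) : ℝ) ∂lam
      = ∫ z in U k, (inner ℝ (EuclideanSpace.single i (1:ℝ))
          (z : EuclideanSpace ℝ (Fin N)) : ℝ) ∂rho := by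
    intro i
    have h1 : (inner ℝ (fk k) (g (EuclideanSpace.single i (1:ℝ))) : ℝ)
        = ∫ z, (⇑(fk k) : UnitSphere N → ℝ) z
            * (inner ℝ (EuclideanSpace.single i (1:ℝ)) (z : EuclideanSpace ℝ (Fin N)) : ℝ) ∂lam := by
      rw [MeasureTheory.L2.inner_def]
      refine MeasureTheory.integral_congr_ae ?_
      filter_upwards [hgcoe (EuclideanSpace.single i (1:ℝ))] with z hz
      simp only [RCLike.inner_apply, starRingEnd_apply, star_trivial, hz, mul_comm]
    have h2 : T k (g (EuclideanSpace.single i (1:ℝ))) = b (k, i) := by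
      rw [← hTb]
    rw [← h1, hTk, h2]
  calc ∫ z, ℓ (z : EuclideanSpace ℝ (Fin N)) ∂(μk k)
      = ∫ z, (⇑(fk k) : UnitSphere N → ℝ) z
          * (inner ℝ y (z : EuclideanSpace ℝ (Fin N)) : ℝ) ∂lam :=
        hstep1.trans (MeasureTheory.integral_congr_ae hstep2)
    _ = ∑ i, y i * ∫ z, (⇑(fk k) : UnitSphere N → ℝ) z
          * (inner ℝ (EuclideanSpace.single i (1:ℝ)) (z : EuclideanSpace ℝ (Fin N)) : ℝ) ∂lam := by
        rw [show (fun z : UnitSphere N => (⇑(fk k) : UnitSphere N → ℝ) z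
              * (inner ℝ y (z : EuclideanSpace ℝ (Fin N)) : ℝ))
            = fun z : UnitSphere N => ∑ i, y i * ((⇑(fk k) : UnitSphere N → ℝ) z
              * (inner ℝ (EuclideanSpace.single i (1:ℝ)) (z : EuclideanSpace ℝ (Fin N)) : ℝ))
          from funext fun z => by
            rw [hyexp, Finset.mul_sum]
            exact Finset.sum_congr rfl fun i _ => by ring]
        rw [MeasureTheory.integral_finset_sum _ (fun i _ => (hintprod i).const_mul _)]
        exact Finset.sum_congr rfl fun i _ => MeasureTheory.integral_const_mul _ _
    _ = ∑ i, y i * ∫ z in U k, (inner ℝ (EuclideanSpace.single i (1:ℝ))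
          (z : EuclideanSpace ℝ (Fin N)) : ℝ) ∂rho := by
        exact Finset.sum_congr rfl fun i _ => by rw [hkey i]
    _ = ∫ z in U k, (inner ℝ y (z : EuclideanSpace ℝ (Fin N)) : ℝ) ∂rho := by
        have e3 : ∀ i : Fin N, y i * ∫ z in U k, (inner ℝ (EuclideanSpace.single i (1:ℝ))
              (z : EuclideanSpace ℝ (Fin N)) : ℝ) ∂rho
            = ∫ z in U k, y i * (inner ℝ (EuclideanSpace.single i (1:ℝ))
              (z : EuclideanSpace ℝ (Fin N)) : ℝ) ∂rho :=
          fun i => (MeasureTheory.integral_const_mul _ _).symm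
        simp only [e3]
        rw [← MeasureTheory.integral_finset_sum _
          (fun i _ => (((hcontx _).integrable_sphere rho).integrableOn).const_mul (y i))]
        refine MeasureTheory.integral_congr_ae (Filter.Eventually.of_forall fun z => ?_)
        exact (hyexp _).symm
    _ = ∫ z in U k, ℓ (z : EuclideanSpace ℝ (Fin N)) ∂rho := by
        refine MeasureTheory.integral_congr_ae (Filter.Eventually.of_forall fun z => ?_)
        exact (hℓ _).symm

end SuppFnAux

/-- **Symmetric dual-cone description over Minkowski balls.** For finite Borel measures
`μ, ν` on `S^{N-1}`: `∫ h_K dμ ≥ ∫ h_K dν` for all origin-symmetric nonempty compact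
convex `K` iff `Sym(μ)` linearly majorizes `Sym(ν)`. -/
theorem suppFn_integrals_symmetric_iff_linMaj_sym {N : ℕ} (hN : 1 ≤ N)
    (μ ν : Measure (UnitSphere N)) [IsFiniteMeasure μ] [IsFiniteMeasure ν] :
    (∀ K : Set (EuclideanSpace ℝ (Fin N)),
        K.Nonempty → IsCompact K → Convex ℝ K → K = -K →
        ∫ z, suppFn K (z : EuclideanSpace ℝ (Fin N)) ∂ν
          ≤ ∫ z, suppFn K (z : EuclideanSpace ℝ (Fin N)) ∂μ) ↔
      LinMaj N (symMeasure μ) (symMeasure ν) := by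
  open SuppFnAux in
  constructor
  · intro hLHS
    apply linMaj_of_hstmt hN
    intro K hne hK hconv
    have hf : Continuous fun z : UnitSphere N => suppFn K (z : EuclideanSpace ℝ (Fin N)) :=
      (continuous_suppFn hne hK).comp continuous_subtype_val
    have hfneg : Continuous fun z : UnitSphere N =>
        suppFn K (-(z : EuclideanSpace ℝ (Fin N))) :=
      (continuous_suppFn hne hK).comp (continuous_subtype_val.neg)
    set K' := symBody K with hK'
    have hK'ne := symBody_nonempty hne
    have hK'cpt := symBody_isCompact hK
    have hK'cvx := symBody_convex hconv
    have hf' : Continuous fun z : UnitSphere N => suppFn K' (z : EuclideanSpace ℝ (Fin N)) :=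
      (continuous_suppFn hK'ne hK'cpt).comp continuous_subtype_val
    have key : ∀ (σ : Measure (UnitSphere N)) [IsFiniteMeasure σ],
        ∫ z, suppFn K (z : EuclideanSpace ℝ (Fin N)) ∂(symMeasure σ)
          = ∫ z, suppFn K' (z : EuclideanSpace ℝ (Fin N)) ∂σ := by
      intro σ _
      rw [integral_symMeasure σ hf]
      have : ∀ z : UnitSphere N, suppFn K' (z : EuclideanSpace ℝ (Fin N))
          = 2⁻¹ * (suppFn K (z : EuclideanSpace ℝ (Fin N))
            + suppFn K (-(z : EuclideanSpace ℝ (Fin N)))) := fun z =>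
        suppFn_symBody hne hK _
      calc 2⁻¹ * ((∫ z, suppFn K (z : EuclideanSpace ℝ (Fin N)) ∂σ)
            + ∫ z, suppFn K (-(z : UnitSphere N) : EuclideanSpace ℝ (Fin N)) ∂σ)
          = ∫ z, 2⁻¹ * (suppFn K (z : EuclideanSpace ℝ (Fin N))
              + suppFn K (-(z : EuclideanSpace ℝ (Fin N)))) ∂σ := by
            rw [← MeasureTheory.integral_add (hf.integrable_sphere σ)
              (hfneg.integrable_sphere σ), ← MeasureTheory.integral_const_mul]
        _ = ∫ z, suppFn K' (z : EuclideanSpace ℝ (Fin N)) ∂σ := by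
            exact MeasureTheory.integral_congr_ae (Filter.Eventually.of_forall fun z =>
              (this z).symm)
    rw [key ν, key μ]
    exact hLHS K' hK'ne hK'cpt hK'cvx symBody_neg
  · intro hLM K hne hK hconv hsym
    have hf : Continuous fun z : UnitSphere N => suppFn K (z : EuclideanSpace ℝ (Fin N)) :=
      (continuous_suppFn hne hK).comp continuous_subtype_val
    have heven : ∀ z : UnitSphere N,
        suppFn K ((-z : UnitSphere N) : EuclideanSpace ℝ (Fin N))
          = suppFn K (z : EuclideanSpace ℝ (Fin N)) := fun z =>
      suppFn_even_of_symm hne hK hsym _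
    have h1 := integral_symMeasure_even ν hf heven
    have h2 := integral_symMeasure_even μ hf heven
    rw [← h1, ← h2]
    exact hstmt_of_linMaj hN _ _ hLM K hne hK hconv
end

section
/- Let X be a real inner product space, let K be a convex cone in X, and let x̄ ∈ K. Define the cone of feasible directions of K at x̄ as Fd(K, x̄) = { h ∈ X : ∃ α > 0, x̄ + α h ∈ K }. Then the inner dual cone of Fd(K, x̄) equals { y ∈ X : y belongs to the inner dual cone of K and ⟪x̄, y⟫ = 0 }. -/
/-- **Dual cone of the cone of feasible directions.** Let `K` be a convex cone in a real
inner product space `X` and `xbar ∈ K`. The inner dual cone of the cone of feasible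
directions `Fd(K, xbar) = {h | ∃ α > 0, xbar + α • h ∈ K}` equals the set of `y` in the inner
dual cone of `K` with `⟪xbar, y⟫ = 0`. -/
theorem dualCone_feasibleDirections {X : Type*} [NormedAddCommGroup X]
    [InnerProductSpace ℝ X]
    (K : Set X)
    (hadd : ∀ x ∈ K, ∀ y ∈ K, x + y ∈ K)
    (hsmul : ∀ c : ℝ, 0 < c → ∀ x ∈ K, c • x ∈ K)
    (xbar : X) (hxbar : xbar ∈ K) :
    {y : X | ∀ h ∈ {h : X | ∃ α : ℝ, 0 < α ∧ xbar + α • h ∈ K}, 0 ≤ (inner ℝ h y : ℝ)} =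
      {y : X | (∀ x ∈ K, 0 ≤ (inner ℝ x y : ℝ)) ∧ (inner ℝ xbar y : ℝ) = 0} := by
  ext y
  simp only [Set.mem_setOf_eq]
  constructor
  · intro hy
    have hK : ∀ x ∈ K, 0 ≤ (inner ℝ x y : ℝ) := by
      intro x hx
      exact hy x ⟨1, one_pos, by simpa using hadd xbar hxbar x hx⟩
    refine ⟨hK, le_antisymm ?_ (hK xbar hxbar)⟩
    have h2 : 0 ≤ (inner ℝ (-xbar) y : ℝ) := by
      refine hy (-xbar) ⟨(1:ℝ)/2, by norm_num, ?_⟩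
      have : xbar + (1/2 : ℝ) • (-xbar) = (1/2 : ℝ) • xbar := by
        rw [smul_neg]; module
      rw [this]
      exact hsmul _ (by norm_num) _ hxbar
    rw [inner_neg_left] at h2
    linarith
  · rintro ⟨hK, hperp⟩ h ⟨α, hα, hmem⟩
    have := hK _ hmem
    rw [inner_add_left, inner_smul_left, hperp] at this
    simp only [starRingEnd_apply, star_trivial, zero_add] at this
    nlinarith
end

section
/- Let N ≥ 2. The set { h_K|_{S^{N-1}} : K ⊆ ℝ^N nonempty compact convex } of restrictions of support functions of compact convex subsets of ℝ^N to the unit sphere has empty interior in the Banach space C(S^{N-1}, ℝ) with the supremum norm. -/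
/-- The set of restrictions to the unit sphere of support functions of nonempty compact
convex subsets of `ℝ^N`, viewed inside `C(S^{N-1}, ℝ)`. -/
def restrictedSuppFns (N : ℕ) : Set C(UnitSphere N, ℝ) :=
  {g | ∃ K : Set (EuclideanSpace ℝ (Fin N)), K.Nonempty ∧ IsCompact K ∧ Convex ℝ K ∧
    ∀ z : UnitSphere N, g z = suppFn K (z : EuclideanSpace ℝ (Fin N))}

/-- Every restricted support function is Lipschitz (with constant a bound on the body). -/
theorem lipschitz_of_mem_restrictedSuppFns {N : ℕ} {g : C(UnitSphere N, ℝ)}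
    (hg : g ∈ restrictedSuppFns N) :
    ∃ C : ℝ, 0 ≤ C ∧ ∀ u v : UnitSphere N,
      |g u - g v| ≤ C * ‖(u : EuclideanSpace ℝ (Fin N)) - (v : EuclideanSpace ℝ (Fin N))‖ := by
  obtain ⟨K, hne, hcomp, -, hgK⟩ := hg
  obtain ⟨r, hr⟩ := hcomp.isBounded.subset_closedBall 0
  set C := max r 0 with hC
  have hC0 : 0 ≤ C := le_max_right _ _
  have hxC : ∀ x ∈ K, ‖x‖ ≤ C := fun x hx =>
    le_trans (by simpa using hr hx) (le_max_left _ _)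
  have hbdd : ∀ z : EuclideanSpace ℝ (Fin N),
      BddAbove ((fun x => (inner ℝ x z : ℝ)) '' K) := by
    intro z
    refine ⟨C * ‖z‖, ?_⟩
    rintro _ ⟨x, hx, rfl⟩
    exact le_trans (real_inner_le_norm x z)
      (mul_le_mul_of_nonneg_right (hxC x hx) (norm_nonneg _))
  have key : ∀ u v : EuclideanSpace ℝ (Fin N), suppFn K u ≤ suppFn K v + C * ‖u - v‖ := by
    intro u v
    apply csSup_le (hne.image _)
    rintro _ ⟨x, hx, rfl⟩
    have h1 : (inner ℝ x v : ℝ) ≤ suppFn K v := le_csSup (hbdd v) ⟨x, hx, rfl⟩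
    have h2 : (inner ℝ x (u - v) : ℝ) ≤ C * ‖u - v‖ :=
      le_trans (real_inner_le_norm x (u - v))
        (mul_le_mul_of_nonneg_right (hxC x hx) (norm_nonneg _))
    have h3 : (inner ℝ x u : ℝ) = inner ℝ x v + (inner ℝ x (u - v) : ℝ) := by
      rw [inner_sub_right]; ring
    linarith
  refine ⟨C, hC0, fun u v => ?_⟩
  rw [hgK u, hgK v, abs_sub_le_iff]
  constructor
  · linarith [key (u : EuclideanSpace ℝ (Fin N)) v]
  · have := key (v : EuclideanSpace ℝ (Fin N)) u
    rw [norm_sub_rev] at this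
    linarith

set_option maxHeartbeats 1000000 in
/-- For `N ≥ 2`, the set of restrictions to the unit sphere of support functions of
nonempty compact convex subsets of `ℝ^N` has empty interior in `C(S^{N-1}, ℝ)` with the
supremum norm. -/
theorem interior_restrictedSuppFns_eq_empty {N : ℕ} (hN : 2 ≤ N) :
    interior (restrictedSuppFns N) = ∅ := by
  rw [Set.eq_empty_iff_forall_notMem]
  intro f hf
  obtain ⟨ε, hε, hball⟩ := Metric.isOpen_iff.mp isOpen_interior f hf
  -- the base points on the sphere
  set i0 : Fin N := ⟨0, by omega⟩
  set i1 : Fin N := ⟨1, by omega⟩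
  set p : EuclideanSpace ℝ (Fin N) := EuclideanSpace.single i0 1 with hpdef
  set e2 : EuclideanSpace ℝ (Fin N) := EuclideanSpace.single i1 1 with he2
  have hp : ‖p‖ = 1 := by simp [hpdef, EuclideanSpace.norm_single]
  have he2n : ‖e2‖ = 1 := by simp [he2, EuclideanSpace.norm_single]
  have hne01 : i0 ≠ i1 := by simp [i0, i1, Fin.ext_iff]
  have hip : (inner ℝ e2 p : ℝ) = 0 := by
    simp [he2, hpdef, EuclideanSpace.inner_single_left, EuclideanSpace.single_apply, hne01]
  have hipp : (inner ℝ p p : ℝ) = 1 := by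
    simp [hpdef, EuclideanSpace.inner_single_left, EuclideanSpace.single_apply]
  have hie : (inner ℝ e2 e2 : ℝ) = 1 := by
    simp [he2, EuclideanSpace.inner_single_left, EuclideanSpace.single_apply]
  have hip2 : (inner ℝ p e2 : ℝ) = 0 := by rw [real_inner_comm]; exact hip
  have hpS : p ∈ UnitSphere N := by simp [mem_sphere_zero_iff_norm, hp]
  set pS : UnitSphere N := ⟨p, hpS⟩ with hpS'
  -- the perturbation φ
  have hcont : Continuous fun z : UnitSphere N =>
      (ε / 2) * min 1 (Real.sqrt ‖(z : EuclideanSpace ℝ (Fin N)) - p‖) := by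
    apply Continuous.mul continuous_const
    apply Continuous.min continuous_const
    exact Real.continuous_sqrt.comp ((continuous_subtype_val.sub continuous_const).norm)
  set φ : C(UnitSphere N, ℝ) :=
    ⟨fun z => (ε / 2) * min 1 (Real.sqrt ‖(z : EuclideanSpace ℝ (Fin N)) - p‖), hcont⟩ with hφ
  have hφ_bound : ∀ z : UnitSphere N, ‖φ z‖ ≤ ε / 2 := by
    intro z
    have h0 : (0:ℝ) ≤ min 1 (Real.sqrt ‖(z : EuclideanSpace ℝ (Fin N)) - p‖) :=
      le_min zero_le_one (Real.sqrt_nonneg _)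
    have h1 : min 1 (Real.sqrt ‖(z : EuclideanSpace ℝ (Fin N)) - p‖) ≤ 1 := min_le_left _ _
    have : |φ z| ≤ ε / 2 := by
      rw [hφ]
      simp only [ContinuousMap.coe_mk]
      rw [abs_mul, abs_of_nonneg (by linarith : (0:ℝ) ≤ ε / 2), abs_of_nonneg h0]
      nlinarith
    simpa using this
  have hφnorm : ‖φ‖ ≤ ε / 2 := ContinuousMap.norm_le φ (by linarith) |>.mpr hφ_bound
  -- both f and f + φ are support functions, hence Lipschitz
  have hfmem : f ∈ restrictedSuppFns N := interior_subset hf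
  have hfφmem : f + φ ∈ restrictedSuppFns N := by
    apply interior_subset (hball ?_)
    rw [Metric.mem_ball, dist_eq_norm]
    have : f + φ - f = φ := by ring
    rw [this]
    linarith
  obtain ⟨C₀, hC₀0, hC₀⟩ := lipschitz_of_mem_restrictedSuppFns hfmem
  obtain ⟨C₁, hC₁0, hC₁⟩ := lipschitz_of_mem_restrictedSuppFns hfφmem
  set C : ℝ := C₀ + C₁ + 1 with hCdef
  have hCpos : 0 < C := by linarith
  -- a point z on the sphere close to p but distinct from it
  set t : ℝ := min (1/2) ((ε / (4 * C)) ^ 2 / 2) with htdef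
  have ht0 : 0 < t := by
    apply lt_min (by norm_num)
    positivity
  have ht1 : t ≤ 1/2 := min_le_left _ _
  have ht2 : 2 * t ≤ (ε / (4 * C)) ^ 2 := by
    have := min_le_right (1/2) ((ε / (4 * C)) ^ 2 / 2)
    rw [← htdef] at this
    linarith
  set z : EuclideanSpace ℝ (Fin N) := Real.cos t • p + Real.sin t • e2 with hz
  have hzn : ‖z‖ = 1 := by
    have h1 : (inner ℝ z z : ℝ) = Real.cos t ^ 2 + Real.sin t ^ 2 := by
      rw [hz, real_inner_add_add_self, real_inner_smul_left, real_inner_smul_right,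
        real_inner_smul_left, real_inner_smul_right, real_inner_smul_left,
        real_inner_smul_right, hipp, hip2, hie]
      ring
    have h2 : (inner ℝ z z : ℝ) = ‖z‖ ^ 2 := real_inner_self_eq_norm_sq z
    have h3 : ‖z‖ ^ 2 = 1 := by rw [← h2, h1, Real.cos_sq_add_sin_sq]
    nlinarith [norm_nonneg z]
  set zS : UnitSphere N := ⟨z, by simp [mem_sphere_zero_iff_norm, hzn]⟩ with hzS'
  -- distance estimates
  have hsinpos : 0 < Real.sin t := Real.sin_pos_of_pos_of_lt_pi ht0
    (by linarith [Real.pi_gt_three])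
  set d : ℝ := ‖z - p‖ with hd
  have hd_pos : 0 < d := by
    rw [hd, norm_pos_iff, sub_ne_zero]
    intro hzp
    have : (inner ℝ e2 z : ℝ) = (inner ℝ e2 p : ℝ) := by rw [hzp]
    rw [hz, inner_add_right, real_inner_smul_right, real_inner_smul_right, hip, hie] at this
    simp at this
    linarith
  have hd_le : d ≤ 2 * t := by
    have hzp : z - p = (Real.cos t - 1) • p + Real.sin t • e2 := by
      rw [hz, sub_smul, one_smul]
      abel
    have h1 : d ≤ ‖(Real.cos t - 1) • p‖ + ‖Real.sin t • e2‖ := by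
      rw [hd, hzp]; exact norm_add_le _ _
    rw [norm_smul, norm_smul, hp, he2n, mul_one, mul_one, Real.norm_eq_abs,
      Real.norm_eq_abs] at h1
    have hcos : |Real.cos t - 1| ≤ t := by
      rw [abs_sub_comm, abs_of_nonneg (by linarith [Real.cos_le_one t])]
      have h := Real.one_sub_sq_div_two_le_cos (x := t)
      nlinarith [ht0.le, ht1]
    have hsin : |Real.sin t| ≤ t := by
      rw [abs_of_nonneg hsinpos.le]
      exact Real.sin_le ht0.le
    linarith
  have hd_le1 : d ≤ 1 := by linarith
  -- the key inequality
  have hsqd : Real.sqrt d ≤ 1 := Real.sqrt_le_one.mpr hd_le1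
  have hφz : φ zS = (ε / 2) * Real.sqrt d := by
    rw [hφ]
    simp only [ContinuousMap.coe_mk, hzS']
    rw [min_eq_right hsqd]
  have hφp : φ pS = 0 := by
    rw [hφ]
    simp [hpS']
  have hfz := hC₀ zS pS
  have hfφz := hC₁ zS pS
  have hcoe : ‖(zS : EuclideanSpace ℝ (Fin N)) - (pS : EuclideanSpace ℝ (Fin N))‖ = d := rfl
  rw [hcoe] at hfz hfφz
  have hφdiff : |φ zS - φ pS| ≤ (C₀ + C₁) * d := by
    have h1 : φ zS - φ pS = ((f + φ) zS - (f + φ) pS) - (f zS - f pS) := by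
      simp [ContinuousMap.add_apply]; ring
    rw [h1]
    calc |((f + φ) zS - (f + φ) pS) - (f zS - f pS)|
        ≤ |(f + φ) zS - (f + φ) pS| + |f zS - f pS| := abs_sub _ _
      _ ≤ C₁ * d + C₀ * d := add_le_add hfφz hfz
      _ = (C₀ + C₁) * d := by ring
  rw [hφz, hφp, sub_zero, abs_of_nonneg (by positivity)] at hφdiff
  -- derive the contradiction
  have hdsq : d = Real.sqrt d * Real.sqrt d := (Real.mul_self_sqrt hd_pos.le).symm
  have hsq_pos : 0 < Real.sqrt d := Real.sqrt_pos.mpr hd_pos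
  have h4' : ε / 2 * Real.sqrt d ≤ ((C₀ + C₁) * Real.sqrt d) * Real.sqrt d := by
    rw [mul_assoc, ← hdsq]; exact hφdiff
  have h4 : ε / 2 ≤ (C₀ + C₁) * Real.sqrt d := le_of_mul_le_mul_right h4' hsq_pos
  have h5 : Real.sqrt d ≤ ε / (4 * C) := by
    have : d ≤ (ε / (4 * C)) ^ 2 := by linarith
    calc Real.sqrt d ≤ Real.sqrt ((ε / (4 * C)) ^ 2) := Real.sqrt_le_sqrt this
      _ = ε / (4 * C) := Real.sqrt_sq (by positivity)
  have h6 : (C₀ + C₁) * Real.sqrt d ≤ C * (ε / (4 * C)) := by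
    have := mul_le_mul (le_of_eq rfl) h5 hsq_pos.le hCpos.le
    nlinarith [hsq_pos.le]
  have h7 : C * (ε / (4 * C)) = ε / 4 := by field_simp
  linarith
end
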